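/- arXiv:1402.2358 — 10 statements merged into one kernel-verified Lean document; each statement's English description precedes it below -/
import Mathlib

section
/- For every nonnegative integer n, the Cauchy number of the second kind satisfies c_n = n! ∫₀^∞ du / (u (π² + (ln u)²) (1+u)^n). -/
open MeasureTheory Real Nat

noncomputable def cauchy2 (n : ℕ) : ℝ :=
  ∫ x in (0:ℝ)..1, ∏ i ∈ Finset.range n, (x + i)

lemma aux_exp_sin (a : ℝ) :
    ∫ x in (0:ℝ)..1, Real.exp (a * x) * Real.sin (π * x)
      = π * (Real.exp a + 1) / (a ^ 2 + π ^ 2) := by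
  have hden : a ^ 2 + π ^ 2 ≠ 0 := by positivity
  have hF : ∀ x : ℝ, HasDerivAt
      (fun y : ℝ => Real.exp (a * y) * (a * Real.sin (π * y) - π * Real.cos (π * y)) / (a ^ 2 + π ^ 2))
      (Real.exp (a * x) * Real.sin (π * x)) x := by
    intro x
    have h1 : HasDerivAt (fun y : ℝ => a * y) a x := by
      simpa using (hasDerivAt_id x).const_mul a
    have h3 : HasDerivAt (fun y : ℝ => π * y) π x := by
      simpa using (hasDerivAt_id x).const_mul π
    have h2 := h1.exp
    have h4 := h3.sin
    have h5 := h3.cos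
    have h6 := (h4.const_mul a).sub (h5.const_mul π)
    have h7 := (h2.mul h6).div_const (a ^ 2 + π ^ 2)
    refine h7.congr_deriv ?_
    simp only [Pi.sub_apply]
    field_simp
    ring
  have hcont : IntervalIntegrable (fun x : ℝ => Real.exp (a * x) * Real.sin (π * x)) volume 0 1 := by
    apply Continuous.intervalIntegrable
    continuity
  rw [intervalIntegral.integral_eq_sub_of_hasDerivAt (fun x _ => hF x) hcont]
  simp [Real.sin_pi, Real.cos_pi, mul_one, mul_zero]
  ring

lemma aux_sin_rpow (u : ℝ) (hu : 0 < u) :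
    ∫ x in (0:ℝ)..1, Real.sin (π * x) * u ^ (x - 1)
      = π * (1 + u) / (u * (π ^ 2 + Real.log u ^ 2)) := by
  have h1 : ∀ x : ℝ, Real.sin (π * x) * u ^ (x - 1)
      = (Real.exp (Real.log u * x) * Real.sin (π * x)) * (Real.exp (Real.log u))⁻¹ := by
    intro x
    rw [Real.rpow_def_of_pos hu]
    rw [mul_sub, mul_one, Real.exp_sub]
    ring
  simp_rw [h1]
  rw [intervalIntegral.integral_mul_const, aux_exp_sin (Real.log u), Real.exp_log hu]
  have h2 : u * (π ^ 2 + Real.log u ^ 2) ≠ 0 := by positivity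
  field_simp
  ring

lemma aux_Gamma_nat_sub (n : ℕ) (x : ℝ) (hx : x < 1) :
    Real.Gamma ((n : ℝ) + 1 - x)
      = (∏ k ∈ Finset.range n, ((k : ℝ) + 1 - x)) * Real.Gamma (1 - x) := by
  induction n with
  | zero => simp
  | succ m ih =>
    have hm : (0:ℝ) ≤ (m:ℝ) := Nat.cast_nonneg m
    have h0 : ((m : ℝ) + 1 - x) ≠ 0 := by nlinarith
    have h1 : ((m + 1 : ℕ) : ℝ) + 1 - x = ((m : ℝ) + 1 - x) + 1 := by push_cast; ring
    rw [h1, Real.Gamma_add_one h0, ih, Finset.prod_range_succ]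
    ring

lemma aux_sin_Gamma (n : ℕ) (x : ℝ) (hx : x ∈ Set.Ioo (0:ℝ) 1) :
    Real.sin (π * x) * (Real.Gamma x * Real.Gamma ((n : ℝ) + 1 - x))
      = π * ∏ k ∈ Finset.range n, ((k : ℝ) + 1 - x) := by
  obtain ⟨hx0, hx1⟩ := hx
  rw [aux_Gamma_nat_sub n x hx1]
  have h := Real.Gamma_mul_Gamma_one_sub x
  have hs : Real.sin (π * x) ≠ 0 := by
    have : 0 < Real.sin (π * x) := by
      apply Real.sin_pos_of_pos_of_lt_pi
      · positivity
      · nlinarith [Real.pi_pos]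
    linarith
  have h2 : Real.sin (π * x) * (Real.Gamma x * Real.Gamma (1 - x)) = π := by
    rw [h]; field_simp
  calc Real.sin (π * x) * (Real.Gamma x * ((∏ k ∈ Finset.range n, ((k : ℝ) + 1 - x)) * Real.Gamma (1 - x)))
      = (Real.sin (π * x) * (Real.Gamma x * Real.Gamma (1 - x))) * ∏ k ∈ Finset.range n, ((k : ℝ) + 1 - x) := by ring
    _ = π * ∏ k ∈ Finset.range n, ((k : ℝ) + 1 - x) := by rw [h2]

lemma aux_beta_real (a b : ℝ) (ha : 0 < a) (hb : 0 < b) :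
    ∫ t in (0:ℝ)..1, t ^ (a - 1) * (1 - t) ^ (b - 1)
      = Real.Gamma a * Real.Gamma b / Real.Gamma (a + b) := by
  have key := Complex.Gamma_mul_Gamma_eq_betaIntegral (s := (a:ℂ)) (t := (b:ℂ))
    (by simpa using ha) (by simpa using hb)
  have hβ : Complex.betaIntegral (a : ℂ) (b : ℂ)
      = ((∫ t in (0:ℝ)..1, t ^ (a - 1) * (1 - t) ^ (b - 1) : ℝ) : ℂ) := by
    rw [Complex.betaIntegral, ← intervalIntegral.integral_ofReal]
    apply intervalIntegral.integral_congr
    intro t ht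
    rw [Set.uIcc_of_le (by norm_num : (0:ℝ) ≤ 1)] at ht
    obtain ⟨ht0, ht1⟩ := ht
    beta_reduce
    rw [show ((a:ℂ) - 1) = ((a - 1 : ℝ) : ℂ) by push_cast; ring,
      show ((b:ℂ) - 1) = ((b - 1 : ℝ) : ℂ) by push_cast; ring,
      show (1 - (t:ℂ)) = ((1 - t : ℝ) : ℂ) by push_cast; ring,
      ← Complex.ofReal_cpow ht0, ← Complex.ofReal_cpow (by linarith : (0:ℝ) ≤ 1 - t)]
    push_cast
    ring
  have hab : (a:ℂ) + b = ((a + b : ℝ) : ℂ) := by push_cast; ring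
  rw [hβ, hab, Complex.Gamma_ofReal, Complex.Gamma_ofReal, Complex.Gamma_ofReal] at key
  have hΓ : Real.Gamma (a + b) ≠ 0 := (Real.Gamma_pos_of_pos (by linarith)).ne'
  have := key
  rw [← Complex.ofReal_mul, ← Complex.ofReal_mul] at this
  have h2 : Real.Gamma a * Real.Gamma b
      = Real.Gamma (a + b) * ∫ t in (0:ℝ)..1, t ^ (a - 1) * (1 - t) ^ (b - 1) := by
    exact_mod_cast this
  rw [h2]
  field_simp

lemma aux_integrableOn (n : ℕ) (x : ℝ) (hx : x ∈ Set.Ioo (0:ℝ) 1) :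
    IntegrableOn (fun u : ℝ => u ^ (x - 1) / (1 + u) ^ (n + 1)) (Set.Ioi 0) := by
  obtain ⟨hx0, hx1⟩ := hx
  have hsplit : Set.Ioi (0:ℝ) = Set.Ioc (0:ℝ) 1 ∪ Set.Ioi 1 :=
    (Set.Ioc_union_Ioi_eq_Ioi (by norm_num)).symm
  rw [hsplit]
  apply IntegrableOn.union
  · -- on (0,1]
    have h1 : IntegrableOn (fun u : ℝ => u ^ (x - 1)) (Set.Ioc 0 1) := by
      have := (intervalIntegral.intervalIntegrable_rpow' (a := (0:ℝ)) (b := 1) (by linarith : (-1:ℝ) < x - 1))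
      rwa [intervalIntegrable_iff_integrableOn_Ioc_of_le (by norm_num)] at this
    apply MeasureTheory.Integrable.mono h1
    · exact (by fun_prop : Measurable fun u : ℝ => u ^ (x - 1) / (1 + u) ^ (n + 1)).aestronglyMeasurable
    · filter_upwards [ae_restrict_mem measurableSet_Ioc] with u hu
      obtain ⟨hu0, hu1⟩ := hu
      have hpow : (1:ℝ) ≤ (1 + u) ^ (n + 1) := one_le_pow₀ (by linarith)
      rw [Real.norm_eq_abs, Real.norm_eq_abs, abs_div, abs_of_nonneg (Real.rpow_nonneg hu0.le _),
        abs_of_nonneg (by positivity : (0:ℝ) ≤ (1 + u) ^ (n + 1))]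
      calc u ^ (x-1) / (1 + u) ^ (n + 1) ≤ u ^ (x-1) / 1 := by
            apply div_le_div_of_nonneg_left (Real.rpow_nonneg hu0.le _) (by norm_num) hpow
        _ = u ^ (x-1) := by ring
  · -- on (1,∞)
    have h2 : IntegrableOn (fun u : ℝ => u ^ (x - 1 - (n + 1 : ℕ))) (Set.Ioi 1) := by
      apply integrableOn_Ioi_rpow_of_lt _ one_pos
      push_cast; linarith [Nat.cast_nonneg (α := ℝ) n]
    apply MeasureTheory.Integrable.mono h2
    · exact (by fun_prop : Measurable fun u : ℝ => u ^ (x - 1) / (1 + u) ^ (n + 1)).aestronglyMeasurable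
    · filter_upwards [ae_restrict_mem measurableSet_Ioi] with u hu
      have hu1 : (1:ℝ) < u := hu
      have hu0 : (0:ℝ) < u := by linarith
      have hpow : (0:ℝ) < u ^ (n + 1) := by positivity
      have hb : u ^ (n+1) ≤ (1 + u) ^ (n + 1) := pow_le_pow_left₀ (by linarith) (by linarith) _
      rw [Real.norm_eq_abs, Real.norm_eq_abs, abs_div, abs_of_nonneg (Real.rpow_nonneg hu0.le _),
        abs_of_nonneg (by positivity : (0:ℝ) ≤ (1 + u) ^ (n + 1)),
        abs_of_nonneg (Real.rpow_nonneg hu0.le _)]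
      calc u ^ (x-1) / (1 + u) ^ (n + 1) ≤ u ^ (x-1) / u ^ (n + 1) :=
            div_le_div_of_nonneg_left (Real.rpow_nonneg hu0.le _) hpow hb
        _ = u ^ (x - 1 - (n + 1 : ℕ)) := by
            rw [← Real.rpow_natCast u (n+1), ← Real.rpow_sub hu0]

lemma aux_image : (fun t : ℝ => t / (1 - t)) '' Set.Ioo 0 1 = Set.Ioi 0 := by
  ext y
  constructor
  · rintro ⟨t, ⟨ht0, ht1⟩, rfl⟩
    exact div_pos ht0 (by linarith)
  · intro hy
    have hy0 : (0:ℝ) < y := hy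
    refine ⟨y / (1 + y), ⟨div_pos hy0 (by linarith), ?_⟩, ?_⟩
    · rw [div_lt_one (by linarith)]; linarith
    · show y / (1 + y) / (1 - y / (1 + y)) = y
      have h1 : 1 - y / (1 + y) = 1 / (1 + y) := by field_simp; ring
      rw [h1]
      field_simp

lemma aux_beta_Ioi (n : ℕ) (x : ℝ) (hx : x ∈ Set.Ioo (0:ℝ) 1) :
    ∫ u in Set.Ioi (0:ℝ), u ^ (x - 1) / (1 + u) ^ (n + 1)
      = Real.Gamma x * Real.Gamma ((n : ℝ) + 1 - x) / (n ! : ℝ) := by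
  obtain ⟨hx0, hx1⟩ := hx
  have hderiv : ∀ t ∈ Set.Ioo (0:ℝ) 1,
      HasDerivWithinAt (fun t : ℝ => t / (1 - t)) (((1 - t) ^ 2)⁻¹) (Set.Ioo 0 1) t := by
    intro t ht
    have h1t : (1:ℝ) - t ≠ 0 := by have := ht.2; intro h; linarith [sub_eq_zero.mp h]
    have := (hasDerivAt_id t).div ((hasDerivAt_const t (1:ℝ)).sub (hasDerivAt_id t)) h1t
    refine this.hasDerivWithinAt.congr_deriv ?_
    simp only [Pi.sub_apply, id]
    field_simp
    ring
  have hinj : Set.InjOn (fun t : ℝ => t / (1 - t)) (Set.Ioo 0 1) := by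
    intro a ha b hb hab
    have ha1 : (1:ℝ) - a ≠ 0 := by have := ha.2; intro h; linarith [sub_eq_zero.mp h]
    have hb1 : (1:ℝ) - b ≠ 0 := by have := hb.2; intro h; linarith [sub_eq_zero.mp h]
    field_simp at hab
    linarith
  have key := integral_image_eq_integral_abs_deriv_smul measurableSet_Ioo hderiv hinj
    (fun u : ℝ => u ^ (x - 1) / (1 + u) ^ (n + 1))
  rw [aux_image] at key
  rw [key]
  have hcongr : ∀ t ∈ Set.Ioo (0:ℝ) 1,
      |((1 - t) ^ 2)⁻¹| • ((t / (1 - t)) ^ (x - 1) / (1 + t / (1 - t)) ^ (n + 1))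
        = t ^ (x - 1) * (1 - t) ^ ((n : ℝ) + 1 - x - 1) := by
    intro t ht
    obtain ⟨ht0, ht1⟩ := ht
    have h1t : (0:ℝ) < 1 - t := by linarith
    have h2 : 1 + t / (1 - t) = (1 - t)⁻¹ := by field_simp; ring
    rw [h2, Real.div_rpow ht0.le h1t.le, smul_eq_mul, abs_of_nonneg (by positivity), inv_pow]
    have e1 : (((1 - t) ^ 2 : ℝ))⁻¹ = (1 - t) ^ ((-2 : ℝ)) := by
      rw [← Real.rpow_natCast (1 - t) 2, ← Real.rpow_neg h1t.le]; norm_num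
    have e2 : (((1 - t) ^ (n + 1) : ℝ))⁻¹ = (1 - t) ^ ((-((n : ℝ) + 1))) := by
      rw [← Real.rpow_natCast (1 - t) (n + 1), ← Real.rpow_neg h1t.le]; push_cast; ring_nf
    rw [e1, e2, div_div, ← Real.rpow_add h1t, div_eq_mul_inv, ← Real.rpow_neg h1t.le,
      mul_comm ((1 - t) ^ ((-2 : ℝ))), mul_assoc, ← Real.rpow_add h1t]
    congr 1
    push_cast
    ring
  rw [setIntegral_congr_fun measurableSet_Ioo hcongr]
  have hItoI : ∫ t in Set.Ioo (0:ℝ) 1, t ^ (x - 1) * (1 - t) ^ ((n : ℝ) + 1 - x - 1)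
      = ∫ t in (0:ℝ)..1, t ^ (x - 1) * (1 - t) ^ ((n : ℝ) + 1 - x - 1) := by
    rw [intervalIntegral.integral_of_le (by norm_num), integral_Ioc_eq_integral_Ioo]
  rw [hItoI, aux_beta_real x ((n : ℝ) + 1 - x) hx0 (by linarith [Nat.cast_nonneg (α := ℝ) n])]
  rw [show x + ((n : ℝ) + 1 - x) = ((n : ℝ) + 1) by ring, Real.Gamma_nat_eq_factorial]

lemma aux_inner_u (n : ℕ) (x : ℝ) (hx : x ∈ Set.Ioo (0:ℝ) 1) :
    ∫ u in Set.Ioi (0:ℝ), Real.sin (π * x) * u ^ (x - 1) / (π * (1 + u) ^ (n + 1))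
      = (∏ k ∈ Finset.range n, ((k : ℝ) + 1 - x)) / (n ! : ℝ) := by
  have hre : ∀ u : ℝ, Real.sin (π * x) * u ^ (x - 1) / (π * (1 + u) ^ (n + 1))
      = (Real.sin (π * x) / π) * (u ^ (x - 1) / (1 + u) ^ (n + 1)) := by
    intro u; rw [div_eq_mul_inv, mul_inv]; ring
  simp_rw [hre]
  rw [MeasureTheory.integral_const_mul, aux_beta_Ioi n x hx]
  have h := aux_sin_Gamma n x hx
  have hπ : (π : ℝ) ≠ 0 := Real.pi_ne_zero
  have hfac : ((n ! : ℝ)) ≠ 0 := by positivity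
  field_simp
  nlinarith [h]

lemma aux_repr_u (n : ℕ) (u : ℝ) (hu : 0 < u) :
    ∫ x in Set.Ioo (0:ℝ) 1, Real.sin (π * x) * u ^ (x - 1) / (π * (1 + u) ^ (n + 1))
      = 1 / (u * (π ^ 2 + Real.log u ^ 2) * (1 + u) ^ n) := by
  have hre : ∀ x : ℝ, Real.sin (π * x) * u ^ (x - 1) / (π * (1 + u) ^ (n + 1))
      = (Real.sin (π * x) * u ^ (x - 1)) * (π * (1 + u) ^ (n + 1))⁻¹ := by
    intro x; rw [div_eq_mul_inv]
  simp_rw [hre]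
  rw [integral_mul_const]
  have hItoI : ∫ x in Set.Ioo (0:ℝ) 1, Real.sin (π * x) * u ^ (x - 1)
      = ∫ x in (0:ℝ)..1, Real.sin (π * x) * u ^ (x - 1) := by
    rw [intervalIntegral.integral_of_le (by norm_num), integral_Ioc_eq_integral_Ioo]
  rw [hItoI, aux_sin_rpow u hu]
  have hπ : (π : ℝ) ≠ 0 := Real.pi_ne_zero
  have h1u : (0:ℝ) < 1 + u := by linarith
  have hlog : (0:ℝ) < π ^ 2 + Real.log u ^ 2 := by positivity
  rw [pow_succ]
  field_simp
  ring

theorem cauchy2_integral_repr (n : ℕ) :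
    cauchy2 n =
      (n ! : ℝ) * ∫ u in Set.Ioi (0:ℝ),
        1 / (u * (π ^ 2 + (Real.log u) ^ 2) * (1 + u) ^ n) := by
  set S : Set ℝ := Set.Ioo 0 1 with hS
  set T : Set ℝ := Set.Ioi 0 with hT
  set F : ℝ → ℝ → ℝ := fun x u => Real.sin (π * x) * u ^ (x - 1) / (π * (1 + u) ^ (n + 1))
    with hF
  -- measurability
  have hST : MeasurableSet (S ×ˢ T) := measurableSet_Ioo.prod measurableSet_Ioi
  have hcont : ContinuousOn (Function.uncurry F) (S ×ˢ T) := by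
    apply ContinuousOn.div
    · apply ContinuousOn.mul
      · exact (Real.continuous_sin.comp (continuous_const.mul continuous_fst)).continuousOn
      · intro p hp
        exact ((continuousAt_snd.rpow (continuousAt_fst.sub continuousAt_const)
          (Or.inl (ne_of_gt hp.2)))).continuousWithinAt
    · exact (continuous_const.mul ((continuous_const.add continuous_snd).pow (n+1))).continuousOn
    · intro p hp
      have h2 : (0:ℝ) < p.2 := hp.2
      have : (0:ℝ) < 1 + p.2 := by linarith
      positivity
  have hmeas : AEStronglyMeasurable (Function.uncurry F)
      ((volume.restrict S).prod (volume.restrict T)) := by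
    rw [Measure.prod_restrict]
    exact hcont.aestronglyMeasurable hST
  -- pointwise rewriting of F
  have hFre : ∀ x u : ℝ, F x u
      = (Real.sin (π * x) / π) * (u ^ (x - 1) / (1 + u) ^ (n + 1)) := by
    intro x u
    simp only [hF]
    rw [div_eq_mul_inv, mul_inv]
    ring
  -- integrability in u for x ∈ S
  have hint_u : ∀ x ∈ S, Integrable (F x) (volume.restrict T) := by
    intro x hx
    apply ((aux_integrableOn n x hx).const_mul (Real.sin (π * x) / π)).congr
    filter_upwards with u
    rw [hFre x u]
  -- nonnegativity and value of the norm integral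
  have hnorm : ∀ x ∈ S, (∫ u, ‖F x u‖ ∂(volume.restrict T))
      = (∏ k ∈ Finset.range n, ((k : ℝ) + 1 - x)) / (n ! : ℝ) := by
    intro x hx
    have hpos : ∀ u ∈ T, ‖F x u‖ = F x u := by
      intro u hu
      have hu0 : (0:ℝ) < u := hu
      have h1u : (0:ℝ) < 1 + u := by linarith
      have hsin : 0 ≤ Real.sin (π * x) := by
        apply Real.sin_nonneg_of_nonneg_of_le_pi
        · nlinarith [Real.pi_pos, hx.1]
        · nlinarith [Real.pi_pos, hx.2]
      rw [Real.norm_eq_abs, abs_of_nonneg]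
      simp only [hF]
      positivity
    rw [setIntegral_congr_fun (by exact measurableSet_Ioi) hpos]
    exact aux_inner_u n x hx
  -- full integrability on the product
  have hInt : Integrable (Function.uncurry F) ((volume.restrict S).prod (volume.restrict T)) := by
    rw [integrable_prod_iff hmeas]
    constructor
    · filter_upwards [ae_restrict_mem measurableSet_Ioo] with x hx
      exact hint_u x hx
    · have hpoly : Integrable (fun x : ℝ => (∏ k ∈ Finset.range n, ((k : ℝ) + 1 - x)) / (n ! : ℝ))
          (volume.restrict S) := by
        apply Integrable.mono_measure _ (Measure.restrict_mono Set.Ioo_subset_Icc_self le_rfl)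
        apply Continuous.integrableOn_Icc
        continuity
      apply hpoly.congr
      filter_upwards [ae_restrict_mem measurableSet_Ioo] with x hx
      exact (hnorm x hx).symm
  -- Fubini
  have hswap := MeasureTheory.integral_integral_swap hInt
  -- compute both iterated integrals
  have hleft : ∫ x in S, ∫ u in T, F x u = ∫ x in S, (∏ k ∈ Finset.range n, ((k : ℝ) + 1 - x)) / (n ! : ℝ) := by
    apply setIntegral_congr_fun measurableSet_Ioo
    intro x hx
    exact aux_inner_u n x hx
  have hright : ∫ u in T, ∫ x in S, F x u
      = ∫ u in T, 1 / (u * (π ^ 2 + Real.log u ^ 2) * (1 + u) ^ n) := by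
    apply setIntegral_congr_fun measurableSet_Ioi
    intro u hu
    exact aux_repr_u n u hu
  have hkey : ∫ u in T, 1 / (u * (π ^ 2 + Real.log u ^ 2) * (1 + u) ^ n)
      = ∫ x in S, (∏ k ∈ Finset.range n, ((k : ℝ) + 1 - x)) / (n ! : ℝ) := by
    rw [← hright, ← hswap, hleft]
  rw [hkey]
  -- finish: pull out the factorial and substitute x ↦ 1 - x
  have hfac : ((n ! : ℝ)) ≠ 0 := by positivity
  have h1 : ∫ x in S, (∏ k ∈ Finset.range n, ((k : ℝ) + 1 - x)) / (n ! : ℝ)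
      = (∫ x in S, ∏ k ∈ Finset.range n, ((k : ℝ) + 1 - x)) / (n ! : ℝ) := by
    simp_rw [div_eq_mul_inv]
    rw [MeasureTheory.integral_mul_const]
  rw [h1, mul_div_cancel₀ _ hfac]
  have h2 : ∫ x in S, ∏ k ∈ Finset.range n, ((k : ℝ) + 1 - x)
      = ∫ x in (0:ℝ)..1, ∏ k ∈ Finset.range n, ((k : ℝ) + 1 - x) := by
    rw [intervalIntegral.integral_of_le (by norm_num), integral_Ioc_eq_integral_Ioo]
  rw [h2]
  have h3 : ∀ x : ℝ, (∏ k ∈ Finset.range n, ((k : ℝ) + 1 - x))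
      = ∏ k ∈ Finset.range n, ((1 - x) + (k : ℝ)) := by
    intro x; exact Finset.prod_congr rfl fun k _ => by ring
  simp_rw [h3]
  rw [intervalIntegral.integral_comp_sub_left (fun y => ∏ k ∈ Finset.range n, (y + (k : ℝ))) 1]
  norm_num [cauchy2]
end

section
/- The sequence {c_n / n!}_{n≥0} is completely monotonic: for all nonnegative integers n and k, (−1)^k Δ^k (c_n/n!) ≥ 0, where Δ^k μ_n = Σ_{m=0}^k (−1)^m (k choose m) μ_{n+k−m}. -/
open MeasureTheory Real Nat

lemma pascal_rec (g : ℕ → ℝ) (k n : ℕ) :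
    ∑ j ∈ Finset.range (k+2), (-1:ℝ)^j * ((k+1).choose j) * g (n+j)
    = ∑ j ∈ Finset.range (k+1), (-1:ℝ)^j * (k.choose j) * g (n+j)
    - ∑ j ∈ Finset.range (k+1), (-1:ℝ)^j * (k.choose j) * g (n+1+j) := by
  rw [Finset.sum_range_succ' (fun j => (-1:ℝ)^j * ((k+1).choose j) * g (n+j))]
  have h1 : ∀ i, ((k+1).choose (i+1) : ℝ) = (k.choose i : ℝ) + (k.choose (i+1) : ℝ) := by
    intro i; rw [Nat.choose_succ_succ]; push_cast; ring
  have : ∑ i ∈ Finset.range (k+1), (-1:ℝ)^(i+1) * ((k+1).choose (i+1)) * g (n+(i+1))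
      = (∑ i ∈ Finset.range (k+1), (-1:ℝ)^(i+1) * (k.choose (i+1)) * g (n+(i+1)))
        - ∑ i ∈ Finset.range (k+1), (-1:ℝ)^i * (k.choose i) * g (n+1+i) := by
    rw [← Finset.sum_sub_distrib]
    apply Finset.sum_congr rfl
    intro i _
    have : n + 1 + i = n + (i+1) := by omega
    rw [this, h1]; ring
  rw [this]
  have h2 : ∑ i ∈ Finset.range (k+1), (-1:ℝ)^(i+1) * (k.choose (i+1)) * g (n+(i+1))
      + (-1:ℝ)^0 * (k.choose 0) * g (n+0)
      = ∑ j ∈ Finset.range (k+2), (-1:ℝ)^j * (k.choose j) * g (n+j) := by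
    rw [Finset.sum_range_succ' (fun j => (-1:ℝ)^j * (k.choose j) * g (n+j))]
  have h3 : ∑ j ∈ Finset.range (k+2), (-1:ℝ)^j * (k.choose j) * g (n+j)
      = ∑ j ∈ Finset.range (k+1), (-1:ℝ)^j * (k.choose j) * g (n+j) := by
    rw [Finset.sum_range_succ, Nat.choose_succ_self]
    simp
  have h0 : ((-1:ℝ)^0 * (k.choose 0) * g (n+0)) = g n := by simp
  have h0' : ((-1:ℝ)^0 * ((k+1).choose 0) * g (n+0)) = g n := by simp
  linarith [h2, h3]

lemma key (x : ℝ) : ∀ k n : ℕ,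
    ∑ j ∈ Finset.range (k+1), (-1:ℝ)^j * (k.choose j) *
      ((∏ i ∈ Finset.range (n+j), (x + i)) / (n+j)!)
    = (∏ i ∈ Finset.range n, (x + i)) * (∏ j ∈ Finset.range k, ((j:ℝ) + 1 - x)) / (n+k)! := by
  intro k
  induction k with
  | zero => intro n; simp
  | succ k ih =>
    intro n
    have hrec := pascal_rec (fun m => (∏ i ∈ Finset.range m, (x + i)) / m !) k n
    beta_reduce at hrec
    rw [show k + 1 + 1 = k + 2 from rfl, hrec, ih n, ih (n+1)]
    have hfn : (∏ i ∈ Finset.range (n+1), (x + i)) = (∏ i ∈ Finset.range n, (x + i)) * (x + n) := by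
      rw [Finset.prod_range_succ]
    rw [hfn, Finset.prod_range_succ]
    have e1 : ((n + (k+1))! : ℝ) = ((n+k)! : ℝ) * ((n:ℝ) + k + 1) := by
      have : n + (k+1) = (n+k) + 1 := by omega
      rw [this, Nat.factorial_succ]; push_cast; ring
    have e2 : ((n + 1 + k)! : ℝ) = ((n+k)! : ℝ) * ((n:ℝ) + k + 1) := by
      have : n + 1 + k = (n+k) + 1 := by omega
      rw [this, Nat.factorial_succ]; push_cast; ring
    rw [e1, e2]
    have hne : ((n+k)! : ℝ) ≠ 0 := Nat.cast_ne_zero.mpr (Nat.factorial_ne_zero _)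
    have hne2 : ((n:ℝ) + k + 1) ≠ 0 := by positivity
    field_simp
    ring

theorem cauchy2_completely_monotonic_sequence (n k : ℕ) :
    0 ≤ (-1 : ℝ) ^ k *
      ∑ m ∈ Finset.range (k + 1),
        (-1 : ℝ) ^ m * (k.choose m) * (cauchy2 (n + k - m) / (n + k - m)!) := by
  have hrefl : ∑ m ∈ Finset.range (k + 1),
        (-1 : ℝ) ^ m * (k.choose m) * (cauchy2 (n + k - m) / (n + k - m)!)
      = ∑ j ∈ Finset.range (k + 1),
        (-1 : ℝ) ^ (k - j) * (k.choose j) * (cauchy2 (n + j) / (n + j)!) := by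
    rw [← Finset.sum_range_reflect
      (fun m => (-1 : ℝ) ^ m * (k.choose m) * (cauchy2 (n + k - m) / (n + k - m)!)) (k+1)]
    apply Finset.sum_congr rfl
    intro j hj
    have hjk : j ≤ k := Nat.lt_succ_iff.mp (Finset.mem_range.mp hj)
    have h0 : k + 1 - 1 - j = k - j := by omega
    have h1 : n + k - (k - j) = n + j := by omega
    rw [h0, h1, Nat.choose_symm hjk]
  rw [hrefl, Finset.mul_sum]
  have hsign : ∀ j ∈ Finset.range (k+1),
      (-1:ℝ)^k * ((-1 : ℝ) ^ (k - j) * (k.choose j) * (cauchy2 (n + j) / (n + j)!))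
      = (-1:ℝ)^j * (k.choose j) * (cauchy2 (n + j) / (n + j)!) := by
    intro j hj
    have hjk : j ≤ k := Nat.lt_succ_iff.mp (Finset.mem_range.mp hj)
    have hs : (-1:ℝ)^k * (-1:ℝ)^(k-j) = (-1:ℝ)^j := by
      rw [← pow_add]
      have : k + (k - j) = 2*(k-j) + j := by omega
      rw [this, pow_add, pow_mul]
      simp
    calc (-1:ℝ)^k * ((-1 : ℝ) ^ (k - j) * (k.choose j) * (cauchy2 (n + j) / (n + j)!))
        = ((-1:ℝ)^k * (-1:ℝ)^(k-j)) * ((k.choose j) * (cauchy2 (n + j) / (n + j)!)) := by ring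
      _ = (-1:ℝ)^j * (k.choose j) * (cauchy2 (n + j) / (n + j)!) := by rw [hs]; ring
  rw [Finset.sum_congr rfl hsign]
  have hterm : ∀ j ∈ Finset.range (k+1),
      (-1:ℝ)^j * (k.choose j) * (cauchy2 (n + j) / (n + j)!)
      = ∫ x in (0:ℝ)..1, (-1:ℝ)^j * (k.choose j) *
          ((∏ i ∈ Finset.range (n+j), (x + i)) / (n+j)!) := by
    intro j _
    rw [intervalIntegral.integral_const_mul, intervalIntegral.integral_div]
    rfl
  rw [Finset.sum_congr rfl hterm]
  have hint : ∀ j ∈ Finset.range (k+1), IntervalIntegrable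
      (fun x : ℝ => (-1:ℝ)^j * (k.choose j) *
        ((∏ i ∈ Finset.range (n+j), (x + i)) / (n+j)!)) volume 0 1 := by
    intro j _
    apply Continuous.intervalIntegrable
    fun_prop
  rw [← intervalIntegral.integral_finset_sum hint]
  have hfe : (fun x : ℝ => ∑ j ∈ Finset.range (k+1), (-1:ℝ)^j * (k.choose j) *
        ((∏ i ∈ Finset.range (n+j), (x + i)) / (n+j)!))
      = fun x : ℝ => (∏ i ∈ Finset.range n, (x + i)) *
          (∏ j ∈ Finset.range k, ((j:ℝ) + 1 - x)) / (n+k)! := by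
    funext x
    exact key x k n
  rw [hfe]
  apply intervalIntegral.integral_nonneg (by norm_num)
  intro x hx
  obtain ⟨hx0, hx1⟩ := hx
  apply div_nonneg
  · apply mul_nonneg
    · apply Finset.prod_nonneg
      intro i _
      positivity
    · apply Finset.prod_nonneg
      intro j _
      have : (1:ℝ) ≤ (j:ℝ) + 1 := le_add_of_nonneg_left (Nat.cast_nonneg j)
      linarith
  · positivity
end

section
/- There exists a non-decreasing bounded function α on [0,1], continuous at 0, such that c_n/n! = ∫₀¹ t^n dα(t) for all nonnegative integers n. Equivalently, there is a finite Borel measure μ on [0,1] with μ({0}) = 0 such that c_n/n! = ∫₀¹ t^n dμ(t) for all n ≥ 0. -/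
open MeasureTheory Real Nat

open scoped ENNReal NNReal

lemma realBeta_eq {a b : ℝ} (ha : 0 < a) (hb : 0 < b) :
    ∫ t in (0:ℝ)..1, t ^ (a-1) * (1-t) ^ (b-1) =
      Real.Gamma a * Real.Gamma b / Real.Gamma (a+b) := by
  have key : ∀ t ∈ Set.uIcc (0:ℝ) 1,
      ((t:ℂ) ^ ((a:ℂ)-1) * (1-(t:ℂ)) ^ ((b:ℂ)-1))
        = ((t ^ (a-1) * (1-t) ^ (b-1) : ℝ) : ℂ) := by
    intro t ht
    rw [Set.uIcc_of_le (by norm_num : (0:ℝ) ≤ 1)] at ht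
    rw [Complex.ofReal_mul, Complex.ofReal_cpow ht.1, Complex.ofReal_cpow (by linarith [ht.2] : (0:ℝ) ≤ 1 - t)]
    push_cast
    ring
  have hβ : Complex.betaIntegral a b
      = ((∫ t in (0:ℝ)..1, t ^ (a-1) * (1-t) ^ (b-1) : ℝ) : ℂ) := by
    rw [Complex.betaIntegral, intervalIntegral.integral_congr key,
      intervalIntegral.integral_ofReal]
  have hG : Complex.Gamma a * Complex.Gamma b
      = Complex.Gamma ((a:ℂ)+b) * Complex.betaIntegral a b :=
    Complex.Gamma_mul_Gamma_eq_betaIntegral (by simpa using ha) (by simpa using hb)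
  have hne : Complex.Gamma ((a:ℂ)+b) ≠ 0 :=
    Complex.Gamma_ne_zero_of_re_pos (by simpa using add_pos ha hb)
  have : Complex.betaIntegral a b = Complex.Gamma a * Complex.Gamma b / Complex.Gamma ((a:ℂ)+b) := by
    field_simp [hG]
    rw [hG]; ring
  rw [hβ] at this
  have := this
  rw [show ((a:ℂ)+b) = ((a+b : ℝ):ℂ) by push_cast; ring, Complex.Gamma_ofReal,
    Complex.Gamma_ofReal, Complex.Gamma_ofReal, ← Complex.ofReal_mul, ← Complex.ofReal_div] at this
  exact_mod_cast this

lemma realBeta_integrableOn {a b : ℝ} (ha : 0 < a) (hb : 0 < b) :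
    IntegrableOn (fun t : ℝ => t ^ (a-1) * (1-t) ^ (b-1)) (Set.Ioo (0:ℝ) 1) := by
  have hC := Complex.betaIntegral_convergent (u := a) (v := b) (by simpa using ha) (by simpa using hb)
  rw [intervalIntegrable_iff_integrableOn_Ioc_of_le (by norm_num : (0:ℝ) ≤ 1)] at hC
  have : IntegrableOn (fun t : ℝ => t ^ (a-1) * (1-t) ^ (b-1)) (Set.Ioc (0:ℝ) 1) := by
    refine (hC.re).congr ?_
    filter_upwards [ae_restrict_mem measurableSet_Ioc] with t ht
    rw [show ((a:ℂ)-1) = ((a-1:ℝ):ℂ) by push_cast; ring,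
      show ((b:ℂ)-1) = ((b-1:ℝ):ℂ) by push_cast; ring,
      show (1 - (t:ℂ)) = ((1-t:ℝ):ℂ) by push_cast; ring,
      ← Complex.ofReal_cpow ht.1.le, ← Complex.ofReal_cpow (by linarith [ht.2] : (0:ℝ) ≤ 1 - t),
      ← Complex.ofReal_mul]
    simp
  exact this.mono_set Set.Ioo_subset_Ioc_self

noncomputable def fker (x t : ℝ) : ℝ :=
  Real.sin (π*x)/π * (Real.exp ((x-1) * Real.log t) * Real.exp ((-x) * Real.log (1-t)))

lemma fker_measurable : Measurable (fun p : ℝ × ℝ => fker p.1 p.2) := by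
  unfold fker
  refine ((Real.measurable_sin.comp (measurable_fst.const_mul π)).div_const π).mul
    (Measurable.mul ?_ ?_)
  · exact ((measurable_fst.sub measurable_const).mul (Real.measurable_log.comp measurable_snd)).exp
  · exact ((measurable_fst.neg).mul (Real.measurable_log.comp (measurable_const.sub measurable_snd))).exp

lemma fker_nonneg {x : ℝ} (hx : x ∈ Set.Ioo (0:ℝ) 1) (t : ℝ) : 0 ≤ fker x t := by
  have hs : 0 < Real.sin (π*x) :=
    Real.sin_pos_of_pos_of_lt_pi (mul_pos pi_pos hx.1) (mul_lt_of_lt_one_right pi_pos hx.2)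
  unfold fker
  positivity

lemma Gamma_ratio {x : ℝ} (hx : 0 < x) (n : ℕ) :
    Real.Gamma ((n:ℝ) + x) = (∏ i ∈ Finset.range n, (x+i)) * Real.Gamma x := by
  induction n with
  | zero => simp
  | succ n ih =>
    have h1 : ((n+1:ℕ):ℝ) + x = ((n:ℝ)+x) + 1 := by push_cast; ring
    have h2 : (n:ℝ) + x ≠ 0 := by positivity
    rw [h1, Real.Gamma_add_one h2, ih, Finset.prod_range_succ]
    push_cast
    ring

lemma cauchyKernel_eq {x t : ℝ} (ht : t ∈ Set.Ioo (0:ℝ) 1) (n : ℕ) :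
    t^n * fker x t = Real.sin (π*x)/π * (t ^ (((n:ℝ)+x)-1) * (1-t) ^ ((1-x)-1)) := by
  have h1 : (((n:ℝ)+x)-1 : ℝ) = (n:ℝ) + (x-1) := by ring
  have h2 : ((1-x)-1 : ℝ) = -x := by ring
  rw [fker, h1, h2, Real.rpow_add ht.1, Real.rpow_natCast,
    Real.rpow_def_of_pos ht.1, Real.rpow_def_of_pos (by linarith [ht.2] : (0:ℝ) < 1 - t)]
  ring_nf

lemma key_integrable {x : ℝ} (hx : x ∈ Set.Ioo (0:ℝ) 1) (n : ℕ) :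
    IntegrableOn (fun t => t^n * fker x t) (Set.Ioo (0:ℝ) 1) := by
  have hna : 0 < (n:ℝ) + x := add_pos_of_nonneg_of_pos n.cast_nonneg hx.1
  have h := (realBeta_integrableOn hna (by linarith [hx.2] : (0:ℝ) < 1 - x)).const_mul
    (Real.sin (π*x)/π)
  refine h.congr ?_
  filter_upwards [ae_restrict_mem measurableSet_Ioo] with t ht
  exact (cauchyKernel_eq ht n).symm

lemma key_value {x : ℝ} (hx : x ∈ Set.Ioo (0:ℝ) 1) (n : ℕ) :
    ∫ t in Set.Ioo (0:ℝ) 1, t^n * fker x t = (∏ i ∈ Finset.range n, (x+i)) / n ! := by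
  have hna : 0 < (n:ℝ) + x := add_pos_of_nonneg_of_pos n.cast_nonneg hx.1
  have hb : (0:ℝ) < 1 - x := by linarith [hx.2]
  have hs : 0 < Real.sin (π*x) :=
    Real.sin_pos_of_pos_of_lt_pi (mul_pos pi_pos hx.1) (mul_lt_of_lt_one_right pi_pos hx.2)
  have hΓ : 0 < Real.Gamma x := Real.Gamma_pos_of_pos hx.1
  rw [setIntegral_congr_fun measurableSet_Ioo (fun t ht => cauchyKernel_eq ht n),
    ← MeasureTheory.integral_Ioc_eq_integral_Ioo,
    ← intervalIntegral.integral_of_le zero_le_one,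
    intervalIntegral.integral_const_mul, realBeta_eq hna hb,
    show ((n:ℝ)+x) + (1-x) = (n:ℝ)+1 by ring,
    Real.Gamma_nat_eq_factorial, Gamma_ratio hx.1 n]
  have hrefl := Real.Gamma_mul_Gamma_one_sub x
  rw [show (∏ i ∈ Finset.range n, (x+(i:ℝ))) * Real.Gamma x * Real.Gamma (1-x)
      = (∏ i ∈ Finset.range n, (x+(i:ℝ))) * (π / Real.sin (π*x)) by rw [mul_assoc, hrefl]]
  field_simp

lemma lint_inner {x : ℝ} (hx : x ∈ Set.Ioo (0:ℝ) 1) (n : ℕ) :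
    ∫⁻ t in Set.Ioo (0:ℝ) 1, ENNReal.ofReal (t^n * fker x t)
      = ENNReal.ofReal ((∏ i ∈ Finset.range n, (x+i)) / n !) := by
  have nn : 0 ≤ᵐ[volume.restrict (Set.Ioo (0:ℝ) 1)] fun t => t^n * fker x t := by
    filter_upwards [ae_restrict_mem measurableSet_Ioo] with t ht
    exact mul_nonneg (pow_nonneg ht.1.le n) (fker_nonneg hx t)
  rw [← ofReal_integral_eq_lintegral_ofReal (key_integrable hx n) nn, key_value hx n]

lemma P_le_one {x : ℝ} (hx : x ∈ Set.Ioo (0:ℝ) 1) (n : ℕ) :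
    (∏ i ∈ Finset.range n, (x+(i:ℝ))) / n ! ≤ 1 := by
  have h2 : ∏ i ∈ Finset.range n, ((i:ℝ)+1) = (n ! : ℝ) := by
    rw [show (n ! : ℝ) = ((∏ i ∈ Finset.range n, (i+1) : ℕ) : ℝ) by
      rw [Finset.prod_range_add_one_eq_factorial]]
    push_cast
    rfl
  have h1 : ∏ i ∈ Finset.range n, (x+(i:ℝ)) ≤ ∏ i ∈ Finset.range n, ((i:ℝ)+1) :=
    Finset.prod_le_prod (fun i _ => add_nonneg hx.1.le i.cast_nonneg)
      (fun i _ => by linarith [hx.2.le])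
  rw [div_le_one (by positivity : (0:ℝ) < n !)]
  linarith [h1, h2.le, h2.ge]

lemma P_nonneg {x : ℝ} (hx : x ∈ Set.Ioo (0:ℝ) 1) (n : ℕ) :
    0 ≤ (∏ i ∈ Finset.range n, (x+(i:ℝ))) / n ! := by
  apply div_nonneg _ (by positivity)
  exact Finset.prod_nonneg fun i _ => add_nonneg hx.1.le i.cast_nonneg

lemma hIntProd (n : ℕ) :
    Integrable (Function.uncurry fun x t : ℝ => t^n * fker x t)
      ((volume.restrict (Set.Ioo (0:ℝ) 1)).prod (volume.restrict (Set.Ioo (0:ℝ) 1))) := by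
  have hm : Measurable (Function.uncurry fun x t : ℝ => t^n * fker x t) :=
    (measurable_snd.pow_const n).mul fker_measurable
  have nn : 0 ≤ᵐ[(volume.restrict (Set.Ioo (0:ℝ) 1)).prod (volume.restrict (Set.Ioo (0:ℝ) 1))]
      Function.uncurry fun x t : ℝ => t^n * fker x t := by
    rw [Measure.prod_restrict]
    filter_upwards [ae_restrict_mem (measurableSet_Ioo.prod measurableSet_Ioo)] with p hp
    exact mul_nonneg (pow_nonneg hp.2.1.le n) (fker_nonneg hp.1 p.2)
  refine ⟨hm.aestronglyMeasurable, ?_⟩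
  rw [hasFiniteIntegral_iff_ofReal nn, lintegral_prod _ hm.ennreal_ofReal.aemeasurable]
  have hb : ∫⁻ x in Set.Ioo (0:ℝ) 1,
      (∫⁻ t in Set.Ioo (0:ℝ) 1, ENNReal.ofReal (t^n * fker x t))
      ≤ ∫⁻ _ in Set.Ioo (0:ℝ) 1, 1 := by
    refine lintegral_mono_ae ?_
    filter_upwards [ae_restrict_mem measurableSet_Ioo] with x hx
    rw [lint_inner hx n]
    exact le_trans (ENNReal.ofReal_le_ofReal (P_le_one hx n)) (by simp)
  refine lt_of_le_of_lt hb ?_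
  rw [setLIntegral_one, Real.volume_Ioo]
  simp

noncomputable def wfun (t : ℝ) : ℝ := ∫ x in Set.Ioo (0:ℝ) 1, fker x t

lemma wfun_nonneg (t : ℝ) : 0 ≤ wfun t :=
  setIntegral_nonneg measurableSet_Ioo fun x hx => fker_nonneg hx t

lemma wfun_sm : StronglyMeasurable wfun :=
  (fker_measurable.comp measurable_swap).stronglyMeasurable.integral_prod_right'

lemma wfun_integrable : Integrable wfun (volume.restrict (Set.Ioo (0:ℝ) 1)) := by
  have h0 := (hIntProd 0).integral_prod_right
  refine h0.congr (Filter.Eventually.of_forall fun t => ?_)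
  simp [wfun, Function.uncurry]

theorem cauchy2_moment_sequence :
    ∃ μ : Measure ℝ, IsFiniteMeasure μ ∧ μ {0} = 0 ∧ μ (Set.Icc (0:ℝ) 1)ᶜ = 0 ∧
      ∀ n : ℕ, cauchy2 n / (n ! : ℝ) = ∫ t, t ^ n ∂μ := by
  set I := Set.Ioo (0:ℝ) 1 with hI
  refine ⟨(volume.restrict I).withDensity (fun t => ((wfun t).toNNReal : ℝ≥0∞)), ?_, ?_, ?_, ?_⟩
  · constructor
    rw [withDensity_apply _ MeasurableSet.univ, Measure.restrict_univ]
    have nn : 0 ≤ᵐ[volume.restrict I] wfun := Filter.Eventually.of_forall wfun_nonneg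
    have : ∫⁻ t, ((wfun t).toNNReal : ℝ≥0∞) ∂(volume.restrict I)
        = ENNReal.ofReal (∫ t, wfun t ∂(volume.restrict I)) :=
      (ofReal_integral_eq_lintegral_ofReal wfun_integrable nn).symm
    rw [this]
    exact ENNReal.ofReal_lt_top
  · rw [withDensity_apply _ (measurableSet_singleton 0),
      Measure.restrict_restrict (measurableSet_singleton 0),
      show {(0:ℝ)} ∩ I = ∅ by
        rw [Set.eq_empty_iff_forall_notMem]; rintro x ⟨hx0, hxI⟩
        rw [Set.mem_singleton_iff] at hx0; subst hx0; exact lt_irrefl 0 hxI.1,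
      Measure.restrict_empty, lintegral_zero_measure]
  · rw [withDensity_apply _ measurableSet_Icc.compl,
      Measure.restrict_restrict measurableSet_Icc.compl,
      show (Set.Icc (0:ℝ) 1)ᶜ ∩ I = ∅ by
        rw [Set.eq_empty_iff_forall_notMem]; rintro x ⟨hx0, hxI⟩
        exact hx0 (Set.Ioo_subset_Icc_self hxI),
      Measure.restrict_empty, lintegral_zero_measure]
  · intro n
    rw [integral_withDensity_eq_integral_smul (wfun_sm.measurable.real_toNNReal) (fun t => t ^ n)]
    have e1 : ∫ t, (wfun t).toNNReal • t ^ n ∂(volume.restrict I)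
        = ∫ t in I, ∫ x in I, t ^ n * fker x t := by
      refine integral_congr_ae (Filter.Eventually.of_forall fun t => ?_)
      show (wfun t).toNNReal • t ^ n = ∫ x in I, t ^ n * fker x t
      rw [MeasureTheory.integral_const_mul, NNReal.smul_def, smul_eq_mul,
        Real.coe_toNNReal _ (wfun_nonneg t)]
      exact mul_comm _ _
    have e2 : ∫ t in I, ∫ x in I, t ^ n * fker x t
        = ∫ x in I, ∫ t in I, t ^ n * fker x t := (integral_integral_swap (hIntProd n)).symm
    have e3 : ∫ x in I, ∫ t in I, t ^ n * fker x t
        = ∫ x in I, (∏ i ∈ Finset.range n, (x+(i:ℝ))) / n ! :=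
      setIntegral_congr_fun measurableSet_Ioo fun x hx => key_value hx n
    have e4 : cauchy2 n / (n ! : ℝ)
        = ∫ x in I, (∏ i ∈ Finset.range n, (x+(i:ℝ))) / n ! := by
      rw [cauchy2, ← intervalIntegral.integral_div,
        intervalIntegral.integral_of_le zero_le_one, MeasureTheory.integral_Ioc_eq_integral_Ioo]
    rw [e1, e2, e3, e4]
end

section
/- For every nonnegative integer n, c_n/n! = ∫₀¹ dt / (t (−ln t) ((ln(−ln t))² + π²) (1 − ln t)^n). -/
open MeasureTheory Real Nat

set_option maxHeartbeats 1000000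

lemma expsin (a : ℝ) : ∫ s in (0:ℝ)..1, Real.exp (a*s) * Real.sin (π*s)
    = π * (Real.exp a + 1) / (a^2 + π^2) := by
  have hD : a^2 + π^2 ≠ 0 := by positivity
  have key : ∀ s : ℝ, HasDerivAt (fun s => Real.exp (a*s) * (a * Real.sin (π*s) - π * Real.cos (π*s)) / (a^2+π^2)) (Real.exp (a*s) * Real.sin (π*s)) s := by
    intro s
    have h1 : HasDerivAt (fun s : ℝ => Real.exp (a*s)) (Real.exp (a*s) * a) s :=
      (Real.hasDerivAt_exp (a*s)).comp s (by simpa using (hasDerivAt_id s).const_mul a)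
    have h2 : HasDerivAt (fun s : ℝ => Real.sin (π*s)) (Real.cos (π*s) * π) s :=
      (Real.hasDerivAt_sin (π*s)).comp s (by simpa using (hasDerivAt_id s).const_mul π)
    have h3 : HasDerivAt (fun s : ℝ => Real.cos (π*s)) (-Real.sin (π*s) * π) s :=
      (Real.hasDerivAt_cos (π*s)).comp s (by simpa using (hasDerivAt_id s).const_mul π)
    have h4 := ((h1.mul ((h2.const_mul a).sub (h3.const_mul π))).div_const (a^2+π^2))
    refine h4.congr_deriv ?_
    rw [Pi.sub_apply, div_eq_iff hD]
    ring
  rw [intervalIntegral.integral_eq_sub_of_hasDerivAt (fun s _ => key s)]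
  · simp [Real.sin_pi, Real.cos_pi]
    field_simp
    ring
  · apply Continuous.intervalIntegrable
    continuity

lemma gammaProd (n : ℕ) {s : ℝ} (hs : s < 1) :
    Real.Gamma ((n:ℝ) + 1 - s) = (∏ i ∈ Finset.range n, ((i:ℝ) + 1 - s)) * Real.Gamma (1 - s) := by
  induction n with
  | zero => simp
  | succ m ih =>
    have hm : (0:ℝ) ≤ (m:ℝ) := Nat.cast_nonneg m
    have h : (↑(m+1) : ℝ) + 1 - s = ((m:ℝ) + 1 - s) + 1 := by push_cast; ring
    rw [h, Real.Gamma_add_one (by nlinarith : (m:ℝ) + 1 - s ≠ 0), ih, Finset.prod_range_succ]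
    ring

lemma betaReal (n : ℕ) {s : ℝ} (h0 : 0 < s) (h1 : s < 1) :
    ∫ x in (0:ℝ)..1, x ^ (s-1) * (1-x) ^ ((n:ℝ) - s)
      = Real.Gamma s * Real.Gamma ((n:ℝ) + 1 - s) / (n ! : ℝ) := by
  have hn : (0:ℝ) ≤ (n:ℝ) := Nat.cast_nonneg n
  have hv : (0:ℝ) < (n:ℝ) + 1 - s := by nlinarith
  have hB := Complex.Gamma_mul_Gamma_eq_betaIntegral (s := (s:ℂ)) (t := ((n:ℝ) + 1 - s : ℝ)) (by simpa using h0) (by simpa using hv)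
  have hsum : (s:ℂ) + ((n:ℝ) + 1 - s : ℝ) = ((n:ℕ):ℂ) + 1 := by push_cast; ring
  rw [hsum, Complex.Gamma_nat_eq_factorial] at hB
  have hBeq : Complex.betaIntegral (s:ℂ) (((n:ℝ) + 1 - s : ℝ):ℂ)
      = ((∫ x in (0:ℝ)..1, x ^ (s-1) * (1-x) ^ ((n:ℝ) - s) : ℝ) : ℂ) := by
    rw [Complex.betaIntegral, ← intervalIntegral.integral_ofReal]
    apply intervalIntegral.integral_congr
    intro x hx
    rw [Set.uIcc_of_le (by norm_num : (0:ℝ) ≤ 1)] at hx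
    obtain ⟨hx0, hx1⟩ := hx
    have e1 : ((s:ℂ) - 1) = ((s - 1 : ℝ) : ℂ) := by push_cast; ring
    have e2 : ((((n:ℝ) + 1 - s : ℝ)):ℂ) - 1 = (((n:ℝ) - s : ℝ) : ℂ) := by push_cast; ring
    have e3 : ((1:ℂ) - (x:ℂ)) = (((1 - x : ℝ)):ℂ) := by push_cast; ring
    show (x:ℂ) ^ ((s:ℂ)-1) * ((1:ℂ)-(x:ℂ)) ^ (((((n:ℝ) + 1 - s : ℝ)):ℂ) - 1) = (((x ^ (s-1) * (1-x) ^ ((n:ℝ) - s) : ℝ)):ℂ)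
    rw [e1, e2, e3, ← Complex.ofReal_cpow hx0, ← Complex.ofReal_cpow (by linarith), ← Complex.ofReal_mul]
  rw [hBeq, Complex.Gamma_ofReal, Complex.Gamma_ofReal, ← Complex.ofReal_mul,
    ← Complex.ofReal_natCast, ← Complex.ofReal_mul] at hB
  have h2 := Complex.ofReal_injective hB
  have hf : (n ! : ℝ) ≠ 0 := by exact_mod_cast Nat.factorial_ne_zero n
  rw [h2]
  field_simp

lemma pointwise (n : ℕ) {s : ℝ} (h0 : 0 < s) (h1 : s < 1)
    (hbeta : ∫ x in (0:ℝ)..1, x ^ (s-1) * (1-x) ^ ((n:ℝ) - s)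
      = Real.Gamma s * Real.Gamma ((n:ℝ) + 1 - s) / (n ! : ℝ))
    (hprod : Real.Gamma ((n:ℝ) + 1 - s) = (∏ i ∈ Finset.range n, ((i:ℝ) + 1 - s)) * Real.Gamma (1 - s)) :
    (∏ i ∈ Finset.range n, ((1 - s) + (i:ℝ))) / (n ! : ℝ)
      = (Real.sin (π*s) / π) * ∫ x in (0:ℝ)..1, x ^ (s-1) * (1-x) ^ ((n:ℝ) - s) := by
  have hrefl : Real.Gamma s * Real.Gamma (1 - s) = π / Real.sin (π * s) :=
    Real.Gamma_mul_Gamma_one_sub s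
  have hsin : 0 < Real.sin (π * s) := by
    apply Real.sin_pos_of_pos_of_lt_pi (by positivity)
    nlinarith [Real.pi_pos]
  have hπ := Real.pi_pos
  rw [hbeta, hprod]
  have hfact : (n ! : ℝ) ≠ 0 := by exact_mod_cast Nat.factorial_ne_zero n
  have : (∏ i ∈ Finset.range n, ((1 - s) + (i:ℝ))) = ∏ i ∈ Finset.range n, ((i:ℝ) + 1 - s) := by
    apply Finset.prod_congr rfl; intro i _; ring
  rw [this]
  field_simp
  rw [eq_div_iff hsin.ne'] at hrefl
  rw [mul_comm s π]
  linear_combination (-(∏ i ∈ Finset.range n, ((i:ℝ) + 1 - s))) * hrefl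

-- real beta integrand integrable on Ioo 0 1
lemma betaIntegrable (n : ℕ) {s : ℝ} (h0 : 0 < s) (h1 : s < 1) :
    IntegrableOn (fun x : ℝ => x ^ (s-1) * (1-x) ^ ((n:ℝ) - s)) (Set.Ioo 0 1) := by
  have hv : (0:ℝ) < (n:ℝ) + 1 - s := by nlinarith [Nat.cast_nonneg (α := ℝ) n]
  have hc := Complex.betaIntegral_convergent (u := (s:ℂ)) (v := (((n:ℝ) + 1 - s : ℝ):ℂ))
    (by simpa using h0) (by simpa using hv)
  rw [intervalIntegrable_iff_integrableOn_Ioc_of_le (by norm_num)] at hc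
  have := (hc.mono_set Set.Ioo_subset_Ioc_self).re
  apply IntegrableOn.congr_fun this ?_ measurableSet_Ioo
  intro x hx
  obtain ⟨hx0, hx1⟩ := hx
  have e1 : ((s:ℂ) - 1) = ((s - 1 : ℝ) : ℂ) := by push_cast; ring
  have e2 : ((((n:ℝ) + 1 - s : ℝ)):ℂ) - 1 = (((n:ℝ) - s : ℝ) : ℂ) := by push_cast; ring
  have e3 : ((1:ℂ) - (x:ℂ)) = (((1 - x : ℝ)):ℂ) := by push_cast; ring
  show RCLike.re ((x:ℂ) ^ ((s:ℂ)-1) * ((1:ℂ)-(x:ℂ)) ^ (((((n:ℝ) + 1 - s : ℝ)):ℂ) - 1)) = _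
  rw [e1, e2, e3, ← Complex.ofReal_cpow hx0.le, ← Complex.ofReal_cpow (by linarith),
    ← Complex.ofReal_mul]
  simp

lemma fmeas (n : ℕ) : Measurable (fun p : ℝ × ℝ =>
    Real.sin (π*p.1)/π * (Real.exp (Real.log p.2 * (p.1-1)) * Real.exp (Real.log (1-p.2) * ((n:ℝ)-p.1)))) := by
  apply Measurable.mul
  · exact ((Real.continuous_sin.comp (continuous_const.mul continuous_fst)).div_const π).measurable
  · exact (((Real.measurable_log.comp measurable_snd).mul
        (measurable_fst.sub measurable_const)).exp).mul
      (((Real.measurable_log.comp (measurable_const.sub measurable_snd)).mul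
        (measurable_const.sub measurable_fst)).exp)

lemma faesm (n : ℕ) : AEStronglyMeasurable (fun p : ℝ × ℝ =>
      Real.sin (π*p.1)/π * (p.2 ^ (p.1-1) * (1-p.2) ^ ((n:ℝ)-p.1)))
    ((volume.restrict (Set.Ioo (0:ℝ) 1)).prod (volume.restrict (Set.Ioo (0:ℝ) 1))) := by
  apply ((fmeas n).aestronglyMeasurable).congr
  rw [Measure.prod_restrict, Filter.EventuallyEq, ae_restrict_iff' (measurableSet_Ioo.prod measurableSet_Ioo)]
  refine ae_of_all _ fun p hp => ?_
  obtain ⟨⟨hs0, hs1⟩, hx0, hx1⟩ := hp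
  rw [Real.rpow_def_of_pos hx0, Real.rpow_def_of_pos (by linarith : (0:ℝ) < 1 - p.2)]

lemma fintegrable (n : ℕ) : Integrable (Function.uncurry fun s x : ℝ =>
      Real.sin (π*s)/π * (x ^ (s-1) * (1-x) ^ ((n:ℝ)-s)))
    ((volume.restrict (Set.Ioo (0:ℝ) 1)).prod (volume.restrict (Set.Ioo (0:ℝ) 1))) := by
  rw [Function.uncurry_def]
  rw [integrable_prod_iff (faesm n)]
  constructor
  · rw [ae_restrict_iff' measurableSet_Ioo]
    refine ae_of_all _ fun s hs => ?_
    have h := (betaIntegrable n hs.1 hs.2).const_mul (Real.sin (π*s)/π)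
    exact h
  · -- integral of norms equals a polynomial in s
    have hmaj : ∀ s ∈ Set.Ioo (0:ℝ) 1,
        (∫ x in Set.Ioo (0:ℝ) 1, ‖Real.sin (π*s)/π * (x ^ (s-1) * (1-x) ^ ((n:ℝ)-s))‖)
          = (∏ i ∈ Finset.range n, ((1 - s) + (i:ℝ))) / (n ! : ℝ) := by
      intro s hs
      obtain ⟨hs0, hs1⟩ := hs
      have hsin : 0 ≤ Real.sin (π * s) := by
        apply Real.sin_nonneg_of_nonneg_of_le_pi (by positivity)
        nlinarith [Real.pi_pos]
      have h1 : ∀ x ∈ Set.Ioo (0:ℝ) 1,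
          ‖Real.sin (π*s)/π * (x ^ (s-1) * (1-x) ^ ((n:ℝ)-s))‖
            = Real.sin (π*s)/π * (x ^ (s-1) * (1-x) ^ ((n:ℝ)-s)) := by
        intro x hx
        have := Real.pi_pos
        have h2 : (0:ℝ) ≤ x ^ (s-1) := Real.rpow_nonneg hx.1.le _
        have h3 : (0:ℝ) ≤ (1-x) ^ ((n:ℝ)-s) := Real.rpow_nonneg (by linarith [hx.2]) _
        rw [Real.norm_eq_abs, abs_of_nonneg (by positivity)]
      rw [setIntegral_congr_fun measurableSet_Ioo h1, integral_const_mul,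
        ← integral_Ioc_eq_integral_Ioo, ← intervalIntegral.integral_of_le (by norm_num : (0:ℝ) ≤ 1)]
      exact (pointwise n hs0 hs1 (betaReal n hs0 hs1) (gammaProd n hs1)).symm
    apply Integrable.congr (f := fun s => (∏ i ∈ Finset.range n, ((1 - s) + (i:ℝ))) / (n ! : ℝ))
    · have hc : Continuous fun s : ℝ => (∏ i ∈ Finset.range n, ((1 - s) + (i:ℝ))) / (n ! : ℝ) := by
        apply Continuous.div_const
        exact continuous_finset_prod _ (fun i _ => by continuity)
      exact (hc.integrableOn_Icc (a := 0) (b := 1)).mono_set Set.Ioo_subset_Icc_self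
    · rw [Filter.EventuallyEq, ae_restrict_iff' measurableSet_Ioo]
      exact ae_of_all _ fun s hs => (hmaj s hs).symm
lemma inner_s (n : ℕ) {x : ℝ} (hx0 : 0 < x) (hx1 : x < 1) :
    ∫ s in Set.Ioo (0:ℝ) 1, Real.sin (π*s)/π * (x ^ (s-1) * (1-x) ^ ((n:ℝ)-s))
      = (1-x)^n / (x * (1-x) * ((Real.log x - Real.log (1-x))^2 + π^2)) := by
  have h1x : (0:ℝ) < 1 - x := by linarith
  set lx := Real.log x with hlx
  set ly := Real.log (1-x) with hly
  have hπ := Real.pi_pos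
  have key : ∀ s : ℝ, Real.sin (π*s)/π * (x ^ (s-1) * (1-x) ^ ((n:ℝ)-s))
      = ((1-x)^n / (π * x)) * (Real.exp ((lx - ly)*s) * Real.sin (π*s)) := by
    intro s
    rw [Real.rpow_def_of_pos hx0, Real.rpow_def_of_pos h1x]
    have hxe : x = Real.exp lx := (Real.exp_log hx0).symm
    have hye : (1-x) = Real.exp ly := (Real.exp_log h1x).symm
    have hpow : (1-x)^n = Real.exp (ly * n) := by
      rw [hye, ← Real.exp_nat_mul]; ring_nf
    rw [hpow]
    have hmul : Real.exp (lx*(s-1)) * Real.exp (ly*((n:ℝ)-s)) * x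
        = Real.exp (ly*(n:ℝ)) * Real.exp ((lx-ly)*s) := by
      rw [hxe, ← Real.exp_add, ← Real.exp_add, ← Real.exp_add]
      congr 1; ring
    rw [div_mul_eq_mul_div, div_mul_eq_mul_div, div_eq_div_iff (by positivity) (by positivity)]
    linear_combination (π * Real.sin (π*s)) * hmul
  rw [setIntegral_congr_fun measurableSet_Ioo (fun s _ => key s), integral_const_mul,
    ← integral_Ioc_eq_integral_Ioo, ← intervalIntegral.integral_of_le (by norm_num : (0:ℝ) ≤ 1),
    expsin]
  have hea : Real.exp (lx - ly) = x / (1-x) := by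
    rw [Real.exp_sub, Real.exp_log hx0, Real.exp_log h1x]
  rw [hea]
  have hA : (0:ℝ) < (lx - ly)^2 + π^2 := by positivity
  field_simp
  ring

lemma chvar (n : ℕ) :
    (∫ t in Set.Ioo (0:ℝ) 1,
        1 / (t * (-Real.log t) * ((Real.log (-Real.log t)) ^ 2 + π ^ 2) * (1 - Real.log t) ^ n))
      = ∫ x in Set.Ioo (0:ℝ) 1,
          (1-x)^n / (x * (1-x) * ((Real.log x - Real.log (1-x))^2 + π^2)) := by
  set pf : ℝ → ℝ := fun x => Real.exp (-(x/(1-x))) with hpf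
  set pd : ℝ → ℝ := fun x => -(Real.exp (-(x/(1-x))) / (1-x)^2) with hpd
  have hπ := Real.pi_pos
  -- derivative
  have hderiv : ∀ x ∈ Set.Ioo (0:ℝ) 1, HasDerivWithinAt pf (pd x) (Set.Ioo (0:ℝ) 1) x := by
    intro x hx
    obtain ⟨hx0, hx1⟩ := hx
    have h1x : (0:ℝ) < 1 - x := by linarith
    have hd1 : HasDerivAt (fun x : ℝ => -(x/(1-x))) (-(1/(1-x)^2)) x := by
      have := ((hasDerivAt_id x).div ((hasDerivAt_const x (1:ℝ)).sub (hasDerivAt_id x)) h1x.ne').neg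
      refine this.congr_deriv ?_
      simp only [Pi.sub_apply, id_eq]
      ring
    have := (Real.hasDerivAt_exp (-(x/(1-x)))).comp x hd1
    refine HasDerivAt.hasDerivWithinAt ?_
    refine this.congr_deriv ?_
    simp only [hpd]
    ring
  -- injectivity
  have hanti : StrictAntiOn pf (Set.Ioo (0:ℝ) 1) := by
    intro a ha b hb hab
    apply Real.exp_lt_exp.mpr
    have h1a : (0:ℝ) < 1 - a := by linarith [ha.2]
    have h1b : (0:ℝ) < 1 - b := by linarith [hb.2]
    have : a / (1-a) < b / (1-b) := by
      rw [div_lt_div_iff₀ h1a h1b]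
      nlinarith [ha.1, hb.1]
    linarith
  have hinj : Set.InjOn pf (Set.Ioo (0:ℝ) 1) := hanti.injOn
  -- image
  have himg : pf '' (Set.Ioo (0:ℝ) 1) = Set.Ioo (0:ℝ) 1 := by
    ext t
    constructor
    · rintro ⟨x, ⟨hx0, hx1⟩, rfl⟩
      have h1x : (0:ℝ) < 1 - x := by linarith
      refine ⟨Real.exp_pos _, Real.exp_lt_one_iff.mpr ?_⟩
      have : 0 < x / (1-x) := by positivity
      linarith
    · rintro ⟨ht0, ht1⟩
      have hlt : Real.log t < 0 := Real.log_neg ht0 ht1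
      set u := -Real.log t with hu
      have hu0 : 0 < u := by simp [hu]; linarith
      refine ⟨u/(1+u), ⟨by positivity, ?_⟩, ?_⟩
      · rw [div_lt_one (by linarith)]; linarith
      · have h1 : 1 - u/(1+u) = 1/(1+u) := by field_simp; ring
        have h2 : (u/(1+u)) / (1 - u/(1+u)) = u := by rw [h1]; field_simp
        simp only [hpf, h2]
        rw [hu]
        simp [Real.exp_log ht0]
  -- change of variables
  rw [← himg, integral_image_eq_integral_abs_deriv_smul measurableSet_Ioo hderiv hinj, himg]
  apply setIntegral_congr_fun measurableSet_Ioo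
  intro x hx
  obtain ⟨hx0, hx1⟩ := hx
  have h1x : (0:ℝ) < 1 - x := by linarith
  have hlogpf : Real.log (pf x) = -(x/(1-x)) := Real.log_exp _
  have hlq : Real.log (x/(1-x)) = Real.log x - Real.log (1-x) := Real.log_div hx0.ne' h1x.ne'
  have hu0 : 0 < x/(1-x) := by positivity
  have hA : (0:ℝ) < (Real.log x - Real.log (1-x))^2 + π^2 := by positivity
  have hone : (1:ℝ) - Real.log (pf x) = 1/(1-x) := by rw [hlogpf]; field_simp; ring
  simp only [smul_eq_mul, hpd, abs_neg, abs_div]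
  rw [abs_of_pos (Real.exp_pos _), abs_of_pos (by positivity : (0:ℝ) < (1-x)^2)]
  rw [hlogpf]
  have hpfpos : 0 < Real.exp (-(x/(1-x))) := Real.exp_pos _
  simp only [hpf]
  have hone' : (1:ℝ) - -(x/(1-x)) = 1/(1-x) := by field_simp; ring
  rw [neg_neg, hlq, hone', div_pow, one_pow]
  rw [div_mul_eq_mul_div, eq_div_iff (by positivity)]
  field_simp

theorem cauchy2_div_factorial_integral (n : ℕ) :
    cauchy2 n / (n ! : ℝ) =
      ∫ t in Set.Ioo (0:ℝ) 1,
        1 / (t * (-Real.log t) * ((Real.log (-Real.log t)) ^ 2 + π ^ 2)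
              * (1 - Real.log t) ^ n) := by
  have h1 : cauchy2 n / (n ! : ℝ)
      = ∫ s in Set.Ioo (0:ℝ) 1, (∏ i ∈ Finset.range n, ((1-s) + (i:ℝ)))/(n ! : ℝ) := by
    rw [cauchy2]
    have hsub : (∫ x in (0:ℝ)..1, ∏ i ∈ Finset.range n, (x + (i:ℝ)))
        = ∫ s in (0:ℝ)..1, ∏ i ∈ Finset.range n, ((1-s) + (i:ℝ)) := by
      rw [intervalIntegral.integral_comp_sub_left
        (fun x => ∏ i ∈ Finset.range n, (x + (i:ℝ))) 1]
      norm_num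
    rw [hsub, intervalIntegral.integral_of_le (by norm_num : (0:ℝ) ≤ 1),
      integral_Ioc_eq_integral_Ioo, ← integral_div]
  have h2 : (∫ s in Set.Ioo (0:ℝ) 1, (∏ i ∈ Finset.range n, ((1-s) + (i:ℝ)))/(n ! : ℝ))
      = ∫ s in Set.Ioo (0:ℝ) 1, ∫ x in Set.Ioo (0:ℝ) 1,
          Real.sin (π*s)/π * (x ^ (s-1) * (1-x) ^ ((n:ℝ)-s)) := by
    apply setIntegral_congr_fun measurableSet_Ioo
    intro s hs
    show (∏ i ∈ Finset.range n, ((1-s) + (i:ℝ)))/(n ! : ℝ) = _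
    rw [pointwise n hs.1 hs.2 (betaReal n hs.1 hs.2) (gammaProd n hs.2),
      intervalIntegral.integral_of_le (by norm_num : (0:ℝ) ≤ 1),
      integral_Ioc_eq_integral_Ioo, ← integral_const_mul]
  have h3 : (∫ s in Set.Ioo (0:ℝ) 1, ∫ x in Set.Ioo (0:ℝ) 1,
          Real.sin (π*s)/π * (x ^ (s-1) * (1-x) ^ ((n:ℝ)-s)))
      = ∫ x in Set.Ioo (0:ℝ) 1, ∫ s in Set.Ioo (0:ℝ) 1,
          Real.sin (π*s)/π * (x ^ (s-1) * (1-x) ^ ((n:ℝ)-s)) :=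
    integral_integral_swap (fintegrable n)
  have h4 : (∫ x in Set.Ioo (0:ℝ) 1, ∫ s in Set.Ioo (0:ℝ) 1,
          Real.sin (π*s)/π * (x ^ (s-1) * (1-x) ^ ((n:ℝ)-s)))
      = ∫ x in Set.Ioo (0:ℝ) 1,
          (1-x)^n / (x * (1-x) * ((Real.log x - Real.log (1-x))^2 + π^2)) := by
    apply setIntegral_congr_fun measurableSet_Ioo
    intro x hx
    exact inner_s n hx.1 hx.2

  rw [h1, h2, h3, h4, chvar]
end

section
/- The function x ↦ ∫₀^∞ du / (u ((ln u)² + π²) (u+1)^x) is completely monotonic on [0,∞): it is nonnegative and (−1)^k times its k-th derivative is nonnegative for every k ≥ 0. -/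
open MeasureTheory Real Nat

noncomputable def f (x : ℝ) : ℝ :=
  ∫ u in Set.Ioi (0:ℝ), 1 / (u * ((Real.log u) ^ 2 + π ^ 2) * (u + 1) ^ x)

namespace CMaux

open Set Filter Topology

noncomputable def psi (k : ℕ) (x : ℝ) (u : ℝ) : ℝ :=
  (Real.log (u + 1)) ^ k / (u * ((Real.log u) ^ 2 + π ^ 2) * (u + 1) ^ x)

noncomputable def Fk (k : ℕ) (x : ℝ) : ℝ := ∫ u in Set.Ioi (0:ℝ), psi k x u

lemma denom_pos {u : ℝ} (hu : 0 < u) (x : ℝ) :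
    0 < u * ((Real.log u) ^ 2 + π ^ 2) * (u + 1) ^ x := by
  have h1 : 0 < (Real.log u) ^ 2 + π ^ 2 := by positivity
  have h2 : (0:ℝ) < (u + 1) ^ x := Real.rpow_pos_of_pos (by linarith) x
  positivity

lemma psi_nonneg (k : ℕ) (x : ℝ) {u : ℝ} (hu : 0 < u) : 0 ≤ psi k x u := by
  have h1 : (0:ℝ) ≤ Real.log (u + 1) := Real.log_nonneg (by linarith)
  exact div_nonneg (pow_nonneg h1 k) (denom_pos hu x).le

lemma Fk_nonneg (k : ℕ) (x : ℝ) : 0 ≤ Fk k x :=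
  setIntegral_nonneg measurableSet_Ioi fun u hu => psi_nonneg k x hu

lemma f_eq : f = Fk 0 := by
  funext x
  simp only [f, Fk, psi, pow_zero]

lemma psi_continuousOn (k : ℕ) (x : ℝ) : ContinuousOn (psi k x) (Set.Ioi 0) := by
  have h1 : ContinuousOn (fun u : ℝ => (Real.log (u + 1)) ^ k) (Set.Ioi 0) := by
    apply ContinuousOn.pow
    exact Real.continuousOn_log.comp (by fun_prop) (fun u hu => by
      simp only [Set.mem_Ioi] at hu; simp only [Set.mem_compl_iff, Set.mem_singleton_iff]; linarith)
  have h2 : ContinuousOn (fun u : ℝ => u * ((Real.log u) ^ 2 + π ^ 2) * (u + 1) ^ x)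
      (Set.Ioi 0) := by
    apply ContinuousOn.mul
    · apply ContinuousOn.mul continuousOn_id
      apply ContinuousOn.add _ continuousOn_const
      exact (Real.continuousOn_log.mono (fun u hu => ne_of_gt hu)).pow 2
    · intro u hu
      simp only [Set.mem_Ioi] at hu
      have h : (u:ℝ) + 1 ≠ 0 := by linarith
      have hadd : ContinuousAt (fun u : ℝ => u + 1) u := by fun_prop
      exact (hadd.rpow_const (Or.inl h)).continuousWithinAt
  exact h1.div h2 (fun u hu => (denom_pos hu x).ne')

lemma psi_aesm (k : ℕ) (x : ℝ) :
    AEStronglyMeasurable (psi k x) (volume.restrict (Set.Ioi 0)) :=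
  (psi_continuousOn k x).aestronglyMeasurable measurableSet_Ioi

/-- the substituted integrand on `ℝ` (via `u = exp v`). -/

noncomputable def hfun (k : ℕ) (x : ℝ) (v : ℝ) : ℝ :=
  (Real.log (Real.exp v + 1)) ^ k * ((v ^ 2 + π ^ 2)⁻¹ * ((Real.exp v + 1) ^ x)⁻¹)

lemma one_le_pi_sq : (1:ℝ) ≤ π ^ 2 := by nlinarith [Real.pi_gt_three]

lemma hfun_nonneg (k : ℕ) (x v : ℝ) : 0 ≤ hfun k x v := by
  have h1 : (0:ℝ) ≤ Real.log (Real.exp v + 1) :=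
    Real.log_nonneg (by nlinarith [Real.exp_pos v])
  have h2 : (0:ℝ) < (Real.exp v + 1) ^ x := Real.rpow_pos_of_pos (by positivity) x
  have h3 : (0:ℝ) < v ^ 2 + π ^ 2 := by positivity
  exact mul_nonneg (pow_nonneg h1 k) (mul_nonneg (inv_nonneg.2 h3.le) (inv_nonneg.2 h2.le))

lemma hfun_continuous (k : ℕ) (x : ℝ) : Continuous (hfun k x) := by
  have h1 : Continuous fun v : ℝ => Real.exp v + 1 := by fun_prop
  have hne : ∀ v : ℝ, Real.exp v + 1 ≠ 0 := fun v => by positivity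
  refine ((h1.log hne).pow k).mul (Continuous.mul ?_ ?_)
  · exact ((continuous_pow 2).add continuous_const).inv₀ (fun v => (by positivity : v ^ 2 + π ^ 2 ≠ 0))
  · exact ((h1.rpow_const fun v => Or.inl (hne v)).inv₀
      fun v => (Real.rpow_pos_of_pos (by positivity) x).ne')

lemma integrableOn_psi_iff (k : ℕ) (x : ℝ) :
    IntegrableOn (psi k x) (Set.Ioi 0) ↔ Integrable (hfun k x) := by
  have himg : Real.exp '' Set.univ = Set.Ioi (0:ℝ) := by
    rw [Set.image_univ, Real.range_exp]
  rw [← himg, integrableOn_image_iff_integrableOn_abs_deriv_smul MeasurableSet.univ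
    (fun v _ => (Real.hasDerivAt_exp v).hasDerivWithinAt) (Real.exp_injective.injOn) (psi k x),
    integrableOn_univ]
  have heq : (fun v => |Real.exp v| • psi k x (Real.exp v)) = hfun k x := by
    funext v
    have hB : (v ^ 2 + π ^ 2) ≠ 0 := by positivity
    have hC : ((Real.exp v + 1:ℝ) ^ x) ≠ 0 := (Real.rpow_pos_of_pos (by positivity) x).ne'
    have hE : Real.exp v ≠ 0 := (Real.exp_pos v).ne'
    simp only [psi, hfun, smul_eq_mul, abs_of_pos (Real.exp_pos v), Real.log_exp]
    field_simp
  rw [heq]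

lemma int_base : Integrable (fun v : ℝ => (v ^ 2 + π ^ 2)⁻¹) := by
  apply integrable_inv_one_add_sq.mono'
  · exact ((continuous_pow 2 |>.add continuous_const).inv₀
      (fun v => (by positivity : v ^ 2 + π ^ 2 ≠ 0))).aestronglyMeasurable
  · refine Filter.Eventually.of_forall fun v => ?_
    rw [Real.norm_eq_abs, abs_of_pos (by positivity)]
    exact inv_anti₀ (by positivity) (by nlinarith [one_le_pi_sq])

lemma hfun_integrable (k : ℕ) {x : ℝ} (hx : 0 < x) : Integrable (hfun k x) := by
  rw [← integrableOn_univ, ← Set.Iic_union_Ioi (a := (0:ℝ))]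
  have haesm : AEStronglyMeasurable (hfun k x) (volume : Measure ℝ) :=
    (hfun_continuous k x).aestronglyMeasurable
  apply IntegrableOn.union
  · -- on Iic 0
    apply Integrable.mono' ((int_base.const_mul ((Real.log 2) ^ k)).integrableOn
      (s := Set.Iic (0:ℝ))) haesm.restrict
    filter_upwards [ae_restrict_mem measurableSet_Iic] with v hv
    have h1 : Real.exp v + 1 ≤ 2 := by
      have := Real.exp_le_one_iff.2 (Set.mem_Iic.1 hv)
      linarith
    have h2 : (0:ℝ) ≤ Real.log (Real.exp v + 1) := Real.log_nonneg (by nlinarith [Real.exp_pos v])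
    have h3 : Real.log (Real.exp v + 1) ≤ Real.log 2 := Real.log_le_log (by positivity) h1
    have h4 : (1:ℝ) ≤ (Real.exp v + 1) ^ x :=
      Real.one_le_rpow (by nlinarith [Real.exp_pos v]) hx.le
    have h5 : ((Real.exp v + 1:ℝ) ^ x)⁻¹ ≤ 1 := by
      rw [inv_le_one_iff₀]; right; exact h4
    rw [Real.norm_eq_abs, abs_of_nonneg (hfun_nonneg k x v)]
    unfold hfun
    have h6 : (v ^ 2 + π ^ 2)⁻¹ ≤ (v ^ 2 + π ^ 2)⁻¹ := le_rfl
    calc (Real.log (Real.exp v + 1)) ^ k * ((v ^ 2 + π ^ 2)⁻¹ * ((Real.exp v + 1) ^ x)⁻¹)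
        ≤ (Real.log 2) ^ k * ((v ^ 2 + π ^ 2)⁻¹ * 1) := by
          apply mul_le_mul (pow_le_pow_left₀ h2 h3 k) ?_ ?_ (by positivity)
          · apply mul_le_mul_of_nonneg_left h5 (by positivity)
          · have : (0:ℝ) < v ^ 2 + π ^ 2 := by positivity
            have : (0:ℝ) < (Real.exp v + 1) ^ x := Real.rpow_pos_of_pos (by positivity) x
            positivity
      _ = (Real.log 2) ^ k * (v ^ 2 + π ^ 2)⁻¹ := by ring
  · -- on Ioi 0
    have hint1 : IntegrableOn (fun v : ℝ => Real.exp (-x * v)) (Set.Ioi 0) :=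
      exp_neg_integrableOn_Ioi 0 hx
    have hint2 : IntegrableOn (fun v : ℝ => v ^ k * Real.exp (-x * v)) (Set.Ioi 0) := by
      have := integrableOn_rpow_mul_exp_neg_mul_rpow (p := 1) (s := (k:ℝ)) (b := x)
        (by exact_mod_cast neg_one_lt_zero.trans_le (Nat.cast_nonneg k)) zero_lt_one hx
      apply this.congr_fun ?_ measurableSet_Ioi
      intro v hv
      simp only [Real.rpow_one, Real.rpow_natCast]
    have hbint : IntegrableOn
        (fun v : ℝ => (2:ℝ) ^ k * Real.exp (-x * v) + (2:ℝ) ^ k * (v ^ k * Real.exp (-x * v)))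
        (Set.Ioi 0) := (hint1.const_mul _).add (hint2.const_mul _)
    apply Integrable.mono' hbint haesm.restrict
    filter_upwards [ae_restrict_mem measurableSet_Ioi] with v hv
    have hv0 : (0:ℝ) < v := hv
    rw [Real.norm_eq_abs, abs_of_nonneg (hfun_nonneg k x v)]
    have h1 : Real.log (Real.exp v + 1) ≤ v + 1 := by
      have : Real.exp v + 1 ≤ Real.exp v * 2 := by nlinarith [Real.exp_pos v, Real.one_le_exp hv0.le]
      calc Real.log (Real.exp v + 1) ≤ Real.log (Real.exp v * 2) :=
            Real.log_le_log (by positivity) this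
        _ = v + Real.log 2 := by rw [Real.log_mul (Real.exp_pos v).ne' two_ne_zero, Real.log_exp]
        _ ≤ v + 1 := by nlinarith [Real.log_le_sub_one_of_pos (by norm_num : (0:ℝ) < 2)]
    have h2 : (0:ℝ) ≤ Real.log (Real.exp v + 1) := Real.log_nonneg (by nlinarith [Real.exp_pos v])
    have h3 : (v ^ 2 + π ^ 2)⁻¹ ≤ 1 := by
      rw [inv_le_one_iff₀]; right; nlinarith [one_le_pi_sq]
    have h4 : ((Real.exp v + 1:ℝ) ^ x)⁻¹ ≤ Real.exp (-x * v) := by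
      rw [show Real.exp (-x * v) = (Real.exp (x * v))⁻¹ by rw [← Real.exp_neg]; ring_nf]
      apply inv_anti₀ (Real.exp_pos _)
      calc Real.exp (x * v) = (Real.exp v) ^ x := by
            rw [← Real.exp_log (Real.exp_pos v), Real.log_exp, ← Real.exp_mul]; ring_nf
        _ ≤ (Real.exp v + 1) ^ x := Real.rpow_le_rpow (Real.exp_pos v).le (by linarith) hx.le
    have h5 : (v + 1) ^ k ≤ (2:ℝ) ^ k + (2:ℝ) ^ k * v ^ k := by
      rcases le_total v 1 with hv1 | hv1
      · calc (v + 1) ^ k ≤ (2:ℝ) ^ k := pow_le_pow_left₀ (by linarith) (by linarith) k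
          _ ≤ 2 ^ k + 2 ^ k * v ^ k := le_add_of_nonneg_right (by positivity)
      · calc (v + 1) ^ k ≤ (2 * v) ^ k := pow_le_pow_left₀ (by linarith) (by linarith) k
          _ = 2 ^ k * v ^ k := by rw [mul_pow]
          _ ≤ 2 ^ k + 2 ^ k * v ^ k := le_add_of_nonneg_left (by positivity)
    calc (Real.log (Real.exp v + 1)) ^ k * ((v ^ 2 + π ^ 2)⁻¹ * ((Real.exp v + 1) ^ x)⁻¹)
        ≤ (v + 1) ^ k * (1 * Real.exp (-x * v)) := by
          apply mul_le_mul (pow_le_pow_left₀ h2 h1 k)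
          · apply mul_le_mul h3 h4 (by positivity) zero_le_one
          · have  hC : (0:ℝ) < (Real.exp v + 1) ^ x := Real.rpow_pos_of_pos (by positivity) x
            have : (0:ℝ) < v ^ 2 + π ^ 2 := by positivity
            positivity
          · positivity
      _ = (v + 1) ^ k * Real.exp (-x * v) := by ring
      _ ≤ ((2:ℝ) ^ k + (2:ℝ) ^ k * v ^ k) * Real.exp (-x * v) := by
          apply mul_le_mul_of_nonneg_right h5 (Real.exp_pos _).le
      _ = 2 ^ k * Real.exp (-x * v) + 2 ^ k * (v ^ k * Real.exp (-x * v)) := by ring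

lemma int_psi (k : ℕ) {x : ℝ} (hx : 0 < x) : IntegrableOn (psi k x) (Set.Ioi 0) :=
  (integrableOn_psi_iff k x).2 (hfun_integrable k hx)

lemma int_psi00 : IntegrableOn (psi 0 0) (Set.Ioi 0) := by
  apply (integrableOn_psi_iff 0 0).2
  have h : hfun 0 0 = fun v : ℝ => (v ^ 2 + π ^ 2)⁻¹ := by
    funext v
    simp [hfun, Real.rpow_zero]
  rw [h]
  exact int_base

lemma psi_mono (k : ℕ) {x y u : ℝ} (hu : 0 < u) (hxy : x ≤ y) : psi k y u ≤ psi k x u := by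
  unfold psi
  apply div_le_div_of_nonneg_left (pow_nonneg (Real.log_nonneg (by linarith)) k)
    (denom_pos hu x)
  apply mul_le_mul_of_nonneg_left
    (Real.rpow_le_rpow_of_exponent_le (by linarith) hxy)
    (by positivity)

lemma hasDerivAt_Fk (k : ℕ) {x : ℝ} (hx : 0 < x) :
    HasDerivAt (Fk k) (-(Fk (k+1) x)) x := by
  have hx2 : 0 < x / 2 := by linarith
  have main := hasDerivAt_integral_of_dominated_loc_of_deriv_le
    (μ := volume.restrict (Set.Ioi (0:ℝ)))
    (F := fun y u => psi k y u) (F' := fun y u => -psi (k+1) y u)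
    (x₀ := x) (s := Metric.ball x (x/2)) (bound := psi (k+1) (x/2)) (Metric.ball_mem_nhds x hx2)
    (Eventually.of_forall fun y => psi_aesm k y) (int_psi k hx)
    ((psi_aesm (k+1) x).neg)
    ?_ (int_psi (k+1) hx2) ?_
  · have h2 := main.2
    rw [integral_neg] at h2
    exact h2
  · -- bound
    filter_upwards [ae_restrict_mem measurableSet_Ioi] with u hu
    intro y hy
    have hu0 : (0:ℝ) < u := hu
    rw [Metric.mem_ball, Real.dist_eq, abs_sub_lt_iff] at hy
    have : x / 2 ≤ y := by linarith
    rw [norm_neg, Real.norm_eq_abs, abs_of_nonneg (psi_nonneg (k+1) y hu0)]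
    exact psi_mono (k+1) hu0 this
  · -- differentiability
    filter_upwards [ae_restrict_mem measurableSet_Ioi] with u hu
    intro y _
    have hu0 : (0:ℝ) < u := hu
    have hu1 : (0:ℝ) < u + 1 := by linarith
    set l := Real.log (u + 1) with hl
    set a := (Real.log (u + 1)) ^ k with ha
    set b := u * ((Real.log u) ^ 2 + π ^ 2) with hb
    have hbpos : 0 < b := by
      have : (0:ℝ) < (Real.log u) ^ 2 + π ^ 2 := by positivity
      positivity
    have key : ∀ z : ℝ, psi k z u = a / b * (Real.exp (l * z))⁻¹ := by
      intro z
      rw [psi, ← hl, ← ha, Real.rpow_def_of_pos hu1, ← hb, div_mul_eq_div_div, div_eq_mul_inv]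
    have key2 : psi (k+1) y u = l * (a / b * (Real.exp (l * y))⁻¹) := by
      rw [psi, ← hl, Real.rpow_def_of_pos hu1, ← hb, div_mul_eq_div_div, div_eq_mul_inv,
        pow_succ, ← ha]
      ring
    simp_rw [key, key2]
    have hD : HasDerivAt (fun z : ℝ => Real.exp (l * z)) (Real.exp (l * y) * l) y := by
      simpa using ((hasDerivAt_id y).const_mul l).exp
    have hfinal := (hD.inv (Real.exp_ne_zero _)).const_mul (a / b)
    convert hfinal using 1
    case e'_8 => rfl
    have hE : Real.exp (l * y) ≠ 0 := Real.exp_ne_zero _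
    case e'_4 => rfl
    field_simp

lemma f_neg {x : ℝ} (hx : x < 0) : f x = 0 := by
  apply integral_undef
  intro h
  set y := -x with hy
  have hy0 : 0 < y := by simp [hy]; linarith
  -- eventual bound`
  have hev : ∀ᶠ u in atTop, 2 * (Real.log u) ^ 2 ≤ u ^ y := by
    have hlo := isLittleO_log_rpow_rpow_atTop (s := y) 2 hy0
    have := hlo.def (c := 1/2) (by norm_num)
    filter_upwards [this, eventually_ge_atTop (1:ℝ)] with u hu hu1
    have hlog : (0:ℝ) ≤ Real.log u := Real.log_nonneg hu1
    have hpow : Real.log u ^ (2:ℝ) = Real.log u ^ (2:ℕ) := by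
      rw [show ((2:ℝ)) = ((2:ℕ):ℝ) by norm_num, Real.rpow_natCast]
    rw [Real.norm_eq_abs, Real.norm_eq_abs, hpow, abs_of_nonneg (by positivity),
      abs_of_nonneg (Real.rpow_nonneg (by linarith) y)] at hu
    nlinarith [hu]
  obtain ⟨A₀, hA₀⟩ := eventually_atTop.1 hev
  set A := max (max A₀ (Real.exp π)) 1 with hA
  have hA1 : (1:ℝ) ≤ A := le_max_right _ _
  have hA0 : (0:ℝ) < A := by linarith
  have hmono : IntegrableOn (fun u : ℝ => 1 / (u * ((Real.log u) ^ 2 + π ^ 2) * (u + 1) ^ x))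
      (Set.Ioi A) := IntegrableOn.mono_set h (Set.Ioi_subset_Ioi (by linarith))
  have : IntegrableOn (fun u : ℝ => u⁻¹) (Set.Ioi A) := by
    apply Integrable.mono' hmono (measurable_inv.aestronglyMeasurable.restrict)
    filter_upwards [ae_restrict_mem measurableSet_Ioi] with u hu
    have huA : A < u := hu
    have hu1 : (1:ℝ) < u := lt_of_le_of_lt hA1 huA
    have hu0 : (0:ℝ) < u := by linarith
    have hupi : Real.exp π ≤ u := le_trans (le_trans (le_max_right A₀ _) (le_max_left _ 1)) huA.le
    have hpi_log : π ≤ Real.log u := by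
      rw [← Real.log_exp π]
      exact Real.log_le_log (Real.exp_pos π) hupi
    have hbd : 2 * (Real.log u) ^ 2 ≤ u ^ y :=
      hA₀ u (le_trans (le_trans (le_max_left A₀ _) (le_max_left _ 1)) huA.le)
    have hBle : (Real.log u) ^ 2 + π ^ 2 ≤ 2 * (Real.log u) ^ 2 := by
      nlinarith [Real.pi_pos]
    have hBpos : (0:ℝ) < (Real.log u) ^ 2 + π ^ 2 := by positivity
    have hrust : (u:ℝ) ^ y ≤ (u + 1) ^ y :=
      Real.rpow_le_rpow hu0.le (by linarith) hy0.le
    have hrw : (u + 1) ^ x = ((u + 1) ^ y)⁻¹ := by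
      rw [hy, Real.rpow_neg (by linarith), inv_inv]
    rw [Real.norm_eq_abs, abs_of_nonneg (inv_nonneg.2 hu0.le), hrw]
    rw [one_div, mul_inv, inv_inv]
    have hBle2 : (Real.log u) ^ 2 + π ^ 2 ≤ (u + 1) ^ y := le_trans (by nlinarith) hrust
    calc u⁻¹ = u⁻¹ * (((Real.log u) ^ 2 + π ^ 2)⁻¹ * ((Real.log u) ^ 2 + π ^ 2)) := by
          field_simp
      _ ≤ u⁻¹ * (((Real.log u) ^ 2 + π ^ 2)⁻¹ * ((u + 1) ^ y)) := by
          apply mul_le_mul_of_nonneg_left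
            (mul_le_mul_of_nonneg_left hBle2 (inv_nonneg.2 hBpos.le)) (inv_nonneg.2 hu0.le)
      _ = (u * ((Real.log u) ^ 2 + π ^ 2))⁻¹ * ((u + 1) ^ y) := by rw [mul_inv]; ring
  exact not_IntegrableOn_Ioi_inv this

lemma psi_pos (k : ℕ) (x : ℝ) {u : ℝ} (hu : 0 < u) (hu1 : 1 ≤ u) : 0 < psi k x u := by
  apply div_pos _ (denom_pos hu x)
  exact pow_pos (Real.log_pos (by linarith)) k

lemma Fk_lower (k : ℕ) : ∃ c : ℝ, 0 < c ∧ ∀ x ∈ Set.Ioc (0:ℝ) 1, c ≤ Fk k x := by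
  have hsub : Set.Ioc (1:ℝ) 2 ⊆ Set.Ioi 0 := fun u hu => lt_trans one_pos hu.1
  have int12 : IntegrableOn (psi k 1) (Set.Ioc 1 2) :=
    (int_psi k one_pos).mono_set hsub
  have hnn : 0 ≤ᵐ[volume.restrict (Set.Ioc (1:ℝ) 2)] psi k 1 := by
    filter_upwards [ae_restrict_mem measurableSet_Ioc] with u hu
    exact psi_nonneg k 1 (lt_trans one_pos hu.1)
  have cpos : 0 < ∫ u in Set.Ioc (1:ℝ) 2, psi k 1 u := by
    rw [setIntegral_pos_iff_support_of_nonneg_ae hnn int12]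
    have : Set.Ioc (1:ℝ) 2 ⊆ Function.support (psi k 1) ∩ Set.Ioc 1 2 := by
      intro u hu
      exact ⟨(psi_pos k 1 (lt_trans one_pos hu.1) hu.1.le).ne', hu⟩
    calc (0:ENNReal) < volume (Set.Ioc (1:ℝ) 2) := by simp
      _ ≤ _ := measure_mono this
  refine ⟨_, cpos, fun x hx => ?_⟩
  have intx12 : IntegrableOn (psi k x) (Set.Ioc 1 2) := (int_psi k hx.1).mono_set hsub
  calc ∫ u in Set.Ioc (1:ℝ) 2, psi k 1 u
      ≤ ∫ u in Set.Ioc (1:ℝ) 2, psi k x u := by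
        apply setIntegral_mono_on int12 intx12 measurableSet_Ioc
        intro u hu
        exact psi_mono k (lt_trans one_pos hu.1) hx.2
    _ ≤ ∫ u in Set.Ioi (0:ℝ), psi k x u := by
        apply setIntegral_mono_set (int_psi k hx.1) ?_ (HasSubset.Subset.eventuallyLE hsub)
        filter_upwards [ae_restrict_mem measurableSet_Ioi] with u hu
        exact psi_nonneg k x hu
    _ = Fk k x := rfl

lemma f0_pos : 0 < f 0 := by
  rw [f_eq]
  show (0:ℝ) < ∫ u in Set.Ioi (0:ℝ), psi 0 0 u
  have hnn : 0 ≤ᵐ[volume.restrict (Set.Ioi (0:ℝ))] psi 0 0 := by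
    filter_upwards [ae_restrict_mem measurableSet_Ioi] with u hu
    exact psi_nonneg 0 0 hu
  rw [setIntegral_pos_iff_support_of_nonneg_ae hnn int_psi00]
  have : Set.Ioi (1:ℝ) ⊆ Function.support (psi 0 0) ∩ Set.Ioi 0 := by
    intro u hu
    exact ⟨(psi_pos 0 0 (lt_trans one_pos hu) (le_of_lt hu)).ne', (lt_trans one_pos hu : (0:ℝ) < u)⟩
  calc (0:ENNReal) < volume (Set.Ioi (1:ℝ)) := by simp
    _ ≤ _ := measure_mono this

lemma iter_pos (k : ℕ) : ∀ x : ℝ, 0 < x → iteratedDeriv k f x = (-1:ℝ) ^ k * Fk k x := by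
  induction k with
  | zero => intro x _; simp [iteratedDeriv_zero, f_eq]
  | succ k ih =>
    intro x hx
    rw [iteratedDeriv_succ]
    have hev : iteratedDeriv k f =ᶠ[𝓝 x] fun y => (-1:ℝ) ^ k * Fk k y := by
      filter_upwards [Ioi_mem_nhds hx] with y hy using ih y hy
    rw [hev.deriv_eq]
    have hD : HasDerivAt (fun y => (-1:ℝ) ^ k * Fk k y) ((-1:ℝ) ^ k * (-(Fk (k+1) x))) x :=
      (hasDerivAt_Fk k hx).const_mul _
    rw [hD.deriv]
    ring

lemma iter_neg (k : ℕ) : ∀ x : ℝ, x < 0 → iteratedDeriv k f x = 0 := by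
  induction k with
  | zero => intro x hx; simpa using f_neg hx
  | succ k ih =>
    intro x hx
    rw [iteratedDeriv_succ]
    have hev : iteratedDeriv k f =ᶠ[𝓝 x] fun _ => (0:ℝ) := by
      filter_upwards [Iio_mem_nhds hx] with y hy using ih y hy
    rw [hev.deriv_eq]
    simp

lemma iter_zero (k : ℕ) (hk : 1 ≤ k) : iteratedDeriv k f 0 = 0 := by
  induction k, hk using Nat.le_induction with
  | base =>
    rw [iteratedDeriv_one]
    apply deriv_zero_of_not_differentiableAt
    intro hd
    have h1 : Tendsto f (𝓝[<] (0:ℝ)) (𝓝 (f 0)) :=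
      hd.continuousAt.tendsto.mono_left nhdsWithin_le_nhds
    have h2 : Tendsto f (𝓝[<] (0:ℝ)) (𝓝 0) := by
      apply Tendsto.congr' _ tendsto_const_nhds
      filter_upwards [self_mem_nhdsWithin] with y hy using (f_neg hy).symm
    exact absurd (tendsto_nhds_unique h1 h2) f0_pos.ne'
  | succ k hk ih =>
    rw [iteratedDeriv_succ]
    apply deriv_zero_of_not_differentiableAt
    intro hd
    obtain ⟨c, hc, hlow⟩ := Fk_lower k
    have h1 : Tendsto (iteratedDeriv k f) (𝓝[>] (0:ℝ)) (𝓝 (iteratedDeriv k f 0)) :=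
      hd.continuousAt.tendsto.mono_left nhdsWithin_le_nhds
    rw [ih] at h1
    have h2 : Tendsto (fun y => |iteratedDeriv k f y|) (𝓝[>] (0:ℝ)) (𝓝 0) := by
      simpa using h1.abs
    have h3 : ∀ᶠ y in 𝓝[>] (0:ℝ), c ≤ |iteratedDeriv k f y| := by
      filter_upwards [Ioo_mem_nhdsGT zero_lt_one] with y hy
      rw [iter_pos k y hy.1, abs_mul, abs_pow, abs_neg, abs_one, one_pow, one_mul,
        abs_of_nonneg (Fk_nonneg k y)]
      exact hlow y ⟨hy.1, hy.2.le⟩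
    exact absurd (ge_of_tendsto h2 h3) (not_le.2 hc)

end CMaux

theorem f_completely_monotonic :
    (∀ x : ℝ, 0 ≤ x → 0 ≤ f x) ∧
    ∀ k : ℕ, ∀ x : ℝ, 0 ≤ x → 0 ≤ (-1 : ℝ) ^ k * iteratedDeriv k f x := by
  constructor
  · intro x _
    rw [CMaux.f_eq]
    exact CMaux.Fk_nonneg 0 x
  · intro k x hx
    rcases eq_or_lt_of_le hx with h0 | hpos
    · rcases Nat.eq_zero_or_pos k with hk | hk
      · subst hk
        simp only [pow_zero, one_mul, iteratedDeriv_zero, ← h0]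
        rw [CMaux.f_eq]; exact CMaux.Fk_nonneg 0 0
      · rw [← h0, CMaux.iter_zero k hk, mul_zero]
    · rw [CMaux.iter_pos k x hpos, ← mul_assoc, ← mul_pow]
      simp only [neg_mul, one_mul, neg_neg, one_pow, CMaux.Fk_nonneg k x]
end

section
/- Let m ≥ 1 and let n, a_1, …, a_m be nonnegative integers. Then the m×m determinant det[(−1)^{a_i+a_j} c_{n+a_i+a_j}] is nonnegative. -/
open MeasureTheory Real Nat

private lemma psd_det_nonneg {N : ℕ} {M : Matrix (Fin N) (Fin N) ℝ}
    (h : M.PosSemidef) : 0 ≤ M.det := by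
  rw [h.1.det_eq_prod_eigenvalues]
  refine Finset.prod_nonneg fun i _ => ?_
  simpa using h.eigenvalues_nonneg i

private lemma gamma_add_nat (x : ℝ) (hx : 0 < x) (N : ℕ) :
    Real.Gamma (x + N) = (∏ k ∈ Finset.range N, (x + k)) * Real.Gamma x := by
  induction N with
  | zero => simp
  | succ N ih =>
    have h1 : x + ((N + 1 : ℕ) : ℝ) = (x + N) + 1 := by push_cast; ring
    have h2 : (x + (N : ℝ)) ≠ 0 := by positivity
    rw [h1, Real.Gamma_add_one h2, Finset.prod_range_succ, ih]
    ring

private lemma quad_nonneg (m n : ℕ) (a : Fin m → ℕ) (v : Fin m → ℝ)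
    (x : ℝ) (hx : 0 < x) :
    0 ≤ ∑ i, ∑ j, v i * v j *
      ((-1 : ℝ) ^ (a i + a j) * ∏ k ∈ Finset.range (n + a i + a j), (x + k)) := by
  have hΓ : 0 < Real.Gamma x := Real.Gamma_pos_of_pos hx
  set f : Fin m → Fin m → ℝ → ℝ := fun i j t =>
    v i * v j * (-1 : ℝ) ^ (a i + a j)
      * (Real.exp (-t) * t ^ (x + (n + a i + a j : ℕ) - 1)) with hf
  have hint : ∀ i j : Fin m, MeasureTheory.IntegrableOn (f i j) (Set.Ioi (0 : ℝ)) := by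
    intro i j
    exact (Real.GammaIntegral_convergent (by positivity :
      (0 : ℝ) < x + (n + a i + a j : ℕ))).const_mul _
  have key : (∑ i, ∑ j, v i * v j *
      ((-1 : ℝ) ^ (a i + a j) * ∏ k ∈ Finset.range (n + a i + a j), (x + k)))
      * Real.Gamma x
      = ∫ t in Set.Ioi (0 : ℝ), ∑ i, ∑ j, f i j t := by
    rw [MeasureTheory.integral_finset_sum _
      (fun i _ => MeasureTheory.integrable_finset_sum _ fun j _ => hint i j)]
    simp_rw [MeasureTheory.integral_finset_sum _ (fun j _ => hint _ j)]
    rw [Finset.sum_mul]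
    refine Finset.sum_congr rfl fun i _ => ?_
    rw [Finset.sum_mul]
    refine Finset.sum_congr rfl fun j _ => ?_
    have hpos : (0 : ℝ) < x + (n + a i + a j : ℕ) := by positivity
    have hG : (∏ k ∈ Finset.range (n + a i + a j), (x + k)) * Real.Gamma x
        = Real.Gamma (x + (n + a i + a j : ℕ)) := (gamma_add_nat x hx _).symm
    calc v i * v j * ((-1 : ℝ) ^ (a i + a j)
          * ∏ k ∈ Finset.range (n + a i + a j), (x + k)) * Real.Gamma x
        = (v i * v j * (-1 : ℝ) ^ (a i + a j))
            * Real.Gamma (x + (n + a i + a j : ℕ)) := by rw [← hG]; try ring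
      _ = ∫ t in Set.Ioi (0 : ℝ), f i j t := by
          rw [Real.Gamma_eq_integral hpos, ← MeasureTheory.integral_const_mul]
  have h2 : 0 ≤ (∑ i, ∑ j, v i * v j *
      ((-1 : ℝ) ^ (a i + a j) * ∏ k ∈ Finset.range (n + a i + a j), (x + k)))
      * Real.Gamma x := by
    rw [key]
    refine MeasureTheory.setIntegral_nonneg measurableSet_Ioi fun t ht => ?_
    have ht' : (0 : ℝ) < t := ht
    have heq : ∑ i, ∑ j, f i j t
        = (∑ i, v i * (-1 : ℝ) ^ (a i) * t ^ (a i)) ^ 2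
            * (Real.exp (-t) * t ^ (x + n - 1)) := by
      rw [sq, Finset.sum_mul_sum, Finset.sum_mul]
      refine Finset.sum_congr rfl fun i _ => ?_
      rw [Finset.sum_mul]
      refine Finset.sum_congr rfl fun j _ => ?_
      have hrw : t ^ (x + (n + a i + a j : ℕ) - 1)
          = t ^ (x + (n : ℕ) - 1) * t ^ (a i) * t ^ (a j) := by
        rw [← Real.rpow_natCast t (a i), ← Real.rpow_natCast t (a j),
          ← Real.rpow_add ht', ← Real.rpow_add ht']
        congr 1
        push_cast
        ring
      simp only [hf]
      rw [hrw, pow_add]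
      ring
    rw [heq]
    have h1 : (0 : ℝ) ≤ Real.exp (-t) * t ^ (x + (n : ℕ) - 1) := by positivity
    exact mul_nonneg (sq_nonneg _) h1
  nlinarith [h2, hΓ]

theorem cauchy2_det_nonneg (m : ℕ) (hm : 1 ≤ m) (n : ℕ) (a : Fin m → ℕ) :
    0 ≤ Matrix.det (Matrix.of fun i j : Fin m =>
      (-1 : ℝ) ^ (a i + a j) * cauchy2 (n + a i + a j)) := by
  refine psd_det_nonneg ?_
  refine Matrix.PosSemidef.of_dotProduct_mulVec_nonneg ?_ ?_
  · ext i j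
    simp only [Matrix.conjTranspose_apply, Matrix.of_apply, star_trivial]
    rw [add_comm (a j) (a i), add_right_comm n (a j) (a i)]
  · intro v
    have hv : dotProduct (star v) ((Matrix.of fun i j : Fin m =>
        (-1 : ℝ) ^ (a i + a j) * cauchy2 (n + a i + a j)).mulVec v)
        = ∑ i, ∑ j, v i * v j *
          ((-1 : ℝ) ^ (a i + a j) * cauchy2 (n + a i + a j)) := by
      simp only [dotProduct, Matrix.mulVec, Matrix.of_apply, star_trivial,
        dotProduct]
      refine Finset.sum_congr rfl fun i _ => ?_
      rw [Finset.mul_sum]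
      refine Finset.sum_congr rfl fun j _ => ?_
      ring
    rw [hv]
    have hswap : (∑ i, ∑ j, v i * v j *
        ((-1 : ℝ) ^ (a i + a j) * cauchy2 (n + a i + a j)))
        = ∫ x in (0:ℝ)..1, ∑ i, ∑ j, v i * v j *
          ((-1 : ℝ) ^ (a i + a j) * ∏ k ∈ Finset.range (n + a i + a j), (x + k)) := by
      have h1 : ∀ i j : Fin m,
          v i * v j * ((-1 : ℝ) ^ (a i + a j) * cauchy2 (n + a i + a j))
          = ∫ x in (0:ℝ)..1, v i * v j * ((-1 : ℝ) ^ (a i + a j)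
              * ∏ k ∈ Finset.range (n + a i + a j), (x + k)) := by
        intro i j
        have hc : ∀ (c : ℝ) (N : ℕ), c * cauchy2 N
            = ∫ x in (0:ℝ)..1, c * ∏ k ∈ Finset.range N, (x + k) := by
          intro c N
          rw [cauchy2, intervalIntegral.integral_const_mul]
        calc v i * v j * ((-1 : ℝ) ^ (a i + a j) * cauchy2 (n + a i + a j))
            = (v i * v j * (-1 : ℝ) ^ (a i + a j)) * cauchy2 (n + a i + a j) := by ring
          _ = ∫ x in (0:ℝ)..1, (v i * v j * (-1 : ℝ) ^ (a i + a j))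
                * ∏ k ∈ Finset.range (n + a i + a j), (x + k) := hc _ _
          _ = ∫ x in (0:ℝ)..1, v i * v j * ((-1 : ℝ) ^ (a i + a j)
                * ∏ k ∈ Finset.range (n + a i + a j), (x + k)) := by
              refine intervalIntegral.integral_congr fun x _ => ?_
              ring
      have econt : ∀ i j : Fin m, Continuous
          (fun x : ℝ => v i * v j * ((-1 : ℝ) ^ (a i + a j)
            * ∏ k ∈ Finset.range (n + a i + a j), (x + k))) := by
        intro i j
        exact continuous_const.mul (continuous_const.mul
          (continuous_finset_prod _ fun k _ => continuous_id.add continuous_const))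
      simp_rw [h1]
      calc ∑ i, ∑ j, ∫ x in (0:ℝ)..1, v i * v j * ((-1 : ℝ) ^ (a i + a j)
              * ∏ k ∈ Finset.range (n + a i + a j), (x + k))
          = ∑ i, ∫ x in (0:ℝ)..1, ∑ j, v i * v j * ((-1 : ℝ) ^ (a i + a j)
              * ∏ k ∈ Finset.range (n + a i + a j), (x + k)) := by
            refine Finset.sum_congr rfl fun i _ => ?_
            exact (intervalIntegral.integral_finset_sum
              (fun j _ => (econt i j).intervalIntegrable 0 1)).symm
        _ = ∫ x in (0:ℝ)..1, ∑ i, ∑ j, v i * v j * ((-1 : ℝ) ^ (a i + a j)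
              * ∏ k ∈ Finset.range (n + a i + a j), (x + k)) := by
            exact (intervalIntegral.integral_finset_sum
              (fun i _ => ((continuous_finset_sum _ fun j _ => econt i j).intervalIntegrable
                0 1))).symm
    rw [hswap, intervalIntegral.integral_of_le zero_le_one]
    refine MeasureTheory.setIntegral_nonneg measurableSet_Ioc fun x hx => ?_
    exact quad_nonneg m n a v x hx.1
end

section
/- Let m ≥ 1 and let λ = (λ_1,…,λ_m) and μ = (μ_1,…,μ_m) be m-tuples of nonnegative integers such that λ is majorized by μ. Then ∏_{i=1}^m c_{λ_i} ≤ ∏_{i=1}^m c_{μ_i}. -/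
open MeasureTheory Real Nat

/-- `a` is majorized by `b`: every partial sum of `a` (i.e. the sum over any subset)
is dominated by the sum of `b` over some subset of the same cardinality, and the
total sums coincide.  This is equivalent to the classical definition via
descending rearrangements. -/
def Majorizes {m : ℕ} (b a : Fin m → ℕ) : Prop :=
  (∀ s : Finset (Fin m), ∃ t : Finset (Fin m), t.card = s.card ∧
      ∑ i ∈ s, a i ≤ ∑ i ∈ t, b i) ∧
  ∑ i, a i = ∑ i, b i

def poch (n : ℕ) (x : ℝ) : ℝ := ∏ i ∈ Finset.range n, (x + i)

lemma poch_cont (n : ℕ) : Continuous (poch n) := by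
  unfold poch; continuity

lemma poch_nonneg {n : ℕ} {x : ℝ} (hx : 0 ≤ x) : 0 ≤ poch n x :=
  Finset.prod_nonneg fun i _ => by positivity

lemma poch_succ (n : ℕ) (x : ℝ) : poch (n+1) x = poch n x * (x + n) := by
  simp [poch, Finset.prod_range_succ]

lemma cauchy2_eq (n : ℕ) : cauchy2 n = ∫ x in Set.Ioc (0:ℝ) 1, poch n x := by
  rw [cauchy2, intervalIntegral.integral_of_le (by norm_num)]; rfl

lemma poch_le_one (n : ℕ) {x : ℝ} (hx : x ∈ Set.Ioc (0:ℝ) 1) : poch n x ≤ poch n 1 := by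
  apply Finset.prod_le_prod (fun i _ => by have := hx.1; positivity)
  intro i _; linarith [hx.2]

lemma sqrt_poch_memL2 (n : ℕ) :
    MemLp (fun x => Real.sqrt (poch n x)) (ENNReal.ofReal 2)
      (volume.restrict (Set.Ioc (0:ℝ) 1)) := by
  apply MemLp.of_bound (((poch_cont n).sqrt).aestronglyMeasurable) (Real.sqrt (poch n 1))
  rw [ae_restrict_iff' measurableSet_Ioc]
  filter_upwards with x hx
  rw [Real.norm_eq_abs, abs_of_nonneg (Real.sqrt_nonneg _)]
  exact Real.sqrt_le_sqrt (poch_le_one n hx)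

lemma cauchy2_logconvex (n : ℕ) :
    cauchy2 (n+1) * cauchy2 (n+1) ≤ cauchy2 n * cauchy2 (n+2) := by
  set F := fun x => Real.sqrt (poch n x) with hF
  set G := fun x => Real.sqrt (poch (n+2) x) with hG
  have hpq : Real.HolderConjugate 2 2 := Real.HolderConjugate.two_two
  have key : ∀ x ∈ Set.Ioc (0:ℝ) 1, poch (n+1) x ≤ F x * G x := by
    intro x hx
    have hx0 : (0:ℝ) ≤ x := le_of_lt hx.1
    have hp : 0 ≤ poch n x := poch_nonneg hx0
    have h1 : poch (n+1) x ^ 2 ≤ poch n x * poch (n+2) x := by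
      rw [poch_succ n, poch_succ (n+1), poch_succ n]
      push_cast
      nlinarith [mul_nonneg (mul_nonneg hp hp) (add_nonneg hx0 (Nat.cast_nonneg (α := ℝ) n))]
    calc poch (n+1) x = Real.sqrt (poch (n+1) x ^ 2) :=
          (Real.sqrt_sq (poch_nonneg hx0)).symm
      _ ≤ Real.sqrt (poch n x * poch (n+2) x) := Real.sqrt_le_sqrt h1
      _ = F x * G x := Real.sqrt_mul hp _
  have step1 : cauchy2 (n+1) ≤ ∫ x in Set.Ioc (0:ℝ) 1, F x * G x := by
    rw [cauchy2_eq]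
    apply setIntegral_mono_on ((poch_cont (n+1)).integrableOn_Ioc)
      (((poch_cont n).sqrt.mul (poch_cont (n+2)).sqrt).integrableOn_Ioc)
      measurableSet_Ioc key
  have holder := MeasureTheory.integral_mul_le_Lp_mul_Lq_of_nonneg hpq
    (f := F) (g := G) (μ := volume.restrict (Set.Ioc (0:ℝ) 1))
    (Filter.Eventually.of_forall fun x => Real.sqrt_nonneg _)
    (Filter.Eventually.of_forall fun x => Real.sqrt_nonneg _)
    (sqrt_poch_memL2 n) (sqrt_poch_memL2 (n+2))
  have hFsq : ∫ x in Set.Ioc (0:ℝ) 1, F x ^ (2:ℝ) = cauchy2 n := by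
    rw [cauchy2_eq]
    apply setIntegral_congr_fun measurableSet_Ioc
    intro x hx
    show F x ^ (2:ℝ) = poch n x
    rw [show ((2:ℝ)) = ((2:ℕ):ℝ) by norm_num, Real.rpow_natCast]
    exact Real.sq_sqrt (poch_nonneg (le_of_lt hx.1))
  have hGsq : ∫ x in Set.Ioc (0:ℝ) 1, G x ^ (2:ℝ) = cauchy2 (n+2) := by
    rw [cauchy2_eq]
    apply setIntegral_congr_fun measurableSet_Ioc
    intro x hx
    show G x ^ (2:ℝ) = poch (n+2) x
    rw [show ((2:ℝ)) = ((2:ℕ):ℝ) by norm_num, Real.rpow_natCast]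
    exact Real.sq_sqrt (poch_nonneg (le_of_lt hx.1))
  rw [hFsq, hGsq] at holder
  have step2 : cauchy2 (n+1) ≤ cauchy2 n ^ (1/2:ℝ) * cauchy2 (n+2) ^ (1/2:ℝ) :=
    le_trans step1 holder
  have hc1 : (0:ℝ) ≤ cauchy2 n := by
    rw [cauchy2_eq]; exact setIntegral_nonneg measurableSet_Ioc fun x hx => poch_nonneg (le_of_lt hx.1)
  have hc2 : (0:ℝ) ≤ cauchy2 (n+2) := by
    rw [cauchy2_eq]; exact setIntegral_nonneg measurableSet_Ioc fun x hx => poch_nonneg (le_of_lt hx.1)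
  have hc0 : (0:ℝ) ≤ cauchy2 (n+1) := by
    rw [cauchy2_eq]; exact setIntegral_nonneg measurableSet_Ioc fun x hx => poch_nonneg (le_of_lt hx.1)
  have hR : (cauchy2 n ^ (1/2:ℝ) * cauchy2 (n+2) ^ (1/2:ℝ)) *
      (cauchy2 n ^ (1/2:ℝ) * cauchy2 (n+2) ^ (1/2:ℝ)) = cauchy2 n * cauchy2 (n+2) := by
    rw [mul_mul_mul_comm, ← Real.rpow_add' hc1 (by norm_num), ← Real.rpow_add' hc2 (by norm_num)]
    norm_num
  calc cauchy2 (n+1) * cauchy2 (n+1)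
      ≤ (cauchy2 n ^ (1/2:ℝ) * cauchy2 (n+2) ^ (1/2:ℝ)) *
        (cauchy2 n ^ (1/2:ℝ) * cauchy2 (n+2) ^ (1/2:ℝ)) :=
        mul_le_mul step2 step2 hc0 (by positivity)
    _ = cauchy2 n * cauchy2 (n+2) := hR


lemma cauchy2_pos (n : ℕ) : 0 < cauchy2 n := by
  rw [cauchy2]
  apply intervalIntegral.intervalIntegral_pos_of_pos_on
  · exact (poch_cont n).intervalIntegrable 0 1
  · intro x hx
    exact Finset.prod_pos fun i _ => by have := hx.1; positivity
  · norm_num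

lemma cauchy2_ratio : ∀ x y : ℕ, y ≤ x →
    cauchy2 x * cauchy2 (y+1) ≤ cauchy2 (x+1) * cauchy2 y := by
  have hmono : Monotone (fun n => cauchy2 (n+1) / cauchy2 n) := by
    apply monotone_nat_of_le_succ
    intro n
    rw [div_le_div_iff₀ (cauchy2_pos n) (cauchy2_pos (n+1))]
    calc cauchy2 (n+1) * cauchy2 (n+1) ≤ cauchy2 n * cauchy2 (n+2) := cauchy2_logconvex n
      _ = cauchy2 (n+1+1) * cauchy2 n := by ring
  intro x y hxy
  have h := hmono hxy
  rw [div_le_div_iff₀ (cauchy2_pos y) (cauchy2_pos x)] at h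
  calc cauchy2 x * cauchy2 (y+1) = cauchy2 (y+1) * cauchy2 x := by ring
    _ ≤ cauchy2 (x+1) * cauchy2 y := h

variable {m : ℕ}

def SS (x : Fin m → ℕ) (k : ℕ) : ℕ :=
  ∑ i ∈ Finset.univ.filter (fun i : Fin m => k ≤ (i:ℕ)), x i

lemma SS_zero (x : Fin m → ℕ) : SS x 0 = ∑ i, x i := by
  unfold SS; congr 1; ext i; simp

lemma SS_split (x : Fin m → ℕ) {k l : ℕ} (hkl : k ≤ l) :
    SS x k = (∑ i ∈ Finset.univ.filter (fun i : Fin m => k ≤ (i:ℕ) ∧ (i:ℕ) < l), x i)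
      + SS x l := by
  unfold SS
  rw [← Finset.sum_filter_add_sum_filter_not
    (Finset.univ.filter fun i : Fin m => k ≤ (i:ℕ)) (fun i => (i:ℕ) < l)]
  congr 1
  · congr 1; ext i; simp
  · congr 1; ext i; simp only [Finset.mem_filter, Finset.mem_univ, true_and]; omega

lemma SS_split_one (x : Fin m → ℕ) (j : Fin m) :
    SS x (j:ℕ) = x j + SS x ((j:ℕ) + 1) := by
  rw [SS_split x (Nat.le_succ (j:ℕ))]
  congr 1
  have hset : Finset.univ.filter (fun i : Fin m => (j:ℕ) ≤ (i:ℕ) ∧ (i:ℕ) < (j:ℕ)+1)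
      = {j} := by
    ext i
    simp only [Finset.mem_filter, Finset.mem_univ, true_and, Finset.mem_singleton,
      Fin.ext_iff]
    omega
  rw [hset, Finset.sum_singleton]

lemma key_lemma (f : ℕ → ℝ) (hpos : ∀ n, 0 < f n)
    (hR : ∀ x y : ℕ, y ≤ x → f x * f (y+1) ≤ f (x+1) * f y) :
    ∀ N : ℕ, ∀ a b : Fin m → ℕ, (∑ i, b i * b i ≤ N) → Monotone a →
      (∀ k, SS a k ≤ SS b k) → (∑ i, a i = ∑ i, b i) →
      ∏ i, f (a i) ≤ ∏ i, f (b i) := by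
  intro N
  induction N using Nat.strong_induction_on with
  | _ N ih =>
  intro a b hN hmono hS hsum
  by_cases hab : ∀ i, b i ≤ a i
  · have heq : ∀ i ∈ Finset.univ, b i = a i :=
      (Finset.sum_eq_sum_iff_of_le (fun i _ => hab i)).mp hsum.symm
    exact le_of_eq (Finset.prod_congr rfl fun i _ => by rw [heq i (Finset.mem_univ i)])
  · push_neg at hab
    set T : Finset (Fin m) := Finset.univ.filter (fun i => a i < b i) with hT
    have hTne : T.Nonempty := by
      obtain ⟨i, hi⟩ := hab
      exact ⟨i, by simp [hT, hi]⟩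
    set j := T.max' hTne with hj
    have hjT : a j < b j := by
      have := T.max'_mem hTne
      simpa [hT] using this
    have hjmax : ∀ i : Fin m, j < i → b i ≤ a i := by
      intro i hi
      by_contra hc
      push_neg at hc
      have : i ∈ T := by simp [hT, hc]
      exact absurd (T.le_max' i this) (not_le.mpr hi)
    -- equality beyond j
    have hIoi : SS a ((j:ℕ)+1) = SS b ((j:ℕ)+1) := by
      refine le_antisymm (hS _) (Finset.sum_le_sum ?_)
      intro i hi
      simp only [Finset.mem_filter, Finset.mem_univ, true_and] at hi
      exact hjmax i (by rw [Fin.lt_iff_val_lt_val]; omega)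
    -- P nonempty
    have hPne : ∃ q : Fin m, (q:ℕ) < (j:ℕ) ∧ b q < a q := by
      by_contra hc
      push_neg at hc
      have h1 : SS a (j:ℕ) + 1 ≤ SS b (j:ℕ) := by
        rw [SS_split_one a j, SS_split_one b j, hIoi]
        omega
      have h2 : ∑ i, a i < ∑ i, b i := by
        rw [← SS_zero, ← SS_zero, SS_split a (Nat.zero_le (j:ℕ)),
          SS_split b (Nat.zero_le (j:ℕ))]
        have h3 : (∑ i ∈ Finset.univ.filter (fun i : Fin m => 0 ≤ (i:ℕ) ∧ (i:ℕ) < (j:ℕ)), a i)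
            ≤ ∑ i ∈ Finset.univ.filter (fun i : Fin m => 0 ≤ (i:ℕ) ∧ (i:ℕ) < (j:ℕ)), b i := by
          apply Finset.sum_le_sum
          intro i hi
          simp only [Finset.mem_filter, Finset.mem_univ, true_and] at hi
          exact hc i hi.2
        omega
      omega
    set P : Finset (Fin m) := Finset.univ.filter (fun i => (i:ℕ) < (j:ℕ) ∧ b i < a i) with hP
    have hPne' : P.Nonempty := by
      obtain ⟨q, hq1, hq2⟩ := hPne
      refine ⟨q, ?_⟩
      simp only [hP, Finset.mem_filter, Finset.mem_univ, true_and]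
      exact ⟨hq1, hq2⟩
    set p := P.max' hPne' with hp
    have hpP : (p:ℕ) < (j:ℕ) ∧ b p < a p := by
      have h : p ∈ P := by rw [hp]; exact P.max'_mem hPne'
      simp only [hP, Finset.mem_filter, Finset.mem_univ, true_and] at h
      exact h
    have hpmax : ∀ i : Fin m, (p:ℕ) < (i:ℕ) → (i:ℕ) < (j:ℕ) → a i ≤ b i := by
      intro i h1 h2
      by_contra hc
      push_neg at hc
      have hiP : i ∈ P := by
        simp only [hP, Finset.mem_filter, Finset.mem_univ, true_and]
        exact ⟨h2, hc⟩
      have := P.le_max' i hiP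
      rw [Fin.le_iff_val_le_val] at this
      omega
    have hpj : p ≠ j := by
      intro hc; rw [hc] at hpP; omega
    have hgap : b p + 2 ≤ b j := by
      have hap : a p ≤ a j := hmono (by rw [Fin.le_iff_val_le_val]; omega)
      omega
    -- strictness
    have hstrict : ∀ k : ℕ, (p:ℕ) < k → k ≤ (j:ℕ) → SS a k + 1 ≤ SS b k := by
      intro k hk1 hk2
      rw [SS_split a hk2, SS_split b hk2, SS_split_one a j, SS_split_one b j, hIoi]
      have hmid : (∑ i ∈ Finset.univ.filter (fun i : Fin m => k ≤ (i:ℕ) ∧ (i:ℕ) < (j:ℕ)), a i)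
          ≤ ∑ i ∈ Finset.univ.filter (fun i : Fin m => k ≤ (i:ℕ) ∧ (i:ℕ) < (j:ℕ)), b i := by
        apply Finset.sum_le_sum
        intro i hi
        simp only [Finset.mem_filter, Finset.mem_univ, true_and] at hi
        exact hpmax i (by omega) hi.2
      omega
    -- the transfer
    set b' := Function.update (Function.update b j (b j - 1)) p (b p + 1) with hb'
    have hb'p : b' p = b p + 1 := by simp [hb']
    have hb'j : b' j = b j - 1 := by
      rw [hb', Function.update_of_ne hpj.symm, Function.update_self]
    have hb'o : ∀ i : Fin m, i ≠ p → i ≠ j → b' i = b i := by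
      intro i h1 h2
      rw [hb', Function.update_of_ne h1, Function.update_of_ne h2]
    -- sums of b' over cut sets
    have hsum_pair : ∀ s : Finset (Fin m), p ∈ s → j ∈ s →
        ∑ i ∈ s, b' i = ∑ i ∈ s, b i := by
      intro s hps hjs
      have hjs' : j ∈ s \ {p} := by simp [hjs, hpj.symm]
      rw [Finset.sum_eq_add_sum_sdiff_singleton_of_mem hps b',
        Finset.sum_eq_add_sum_sdiff_singleton_of_mem hjs' b',
        Finset.sum_eq_add_sum_sdiff_singleton_of_mem hps b,
        Finset.sum_eq_add_sum_sdiff_singleton_of_mem hjs' b]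
      have hrest : ∑ i ∈ (s \ {p}) \ {j}, b' i = ∑ i ∈ (s \ {p}) \ {j}, b i := by
        apply Finset.sum_congr rfl
        intro i hi
        simp only [Finset.mem_sdiff, Finset.mem_singleton] at hi
        exact hb'o i hi.1.2 hi.2
      rw [hrest, hb'p, hb'j]
      omega
    have hsum_j : ∀ s : Finset (Fin m), p ∉ s → j ∈ s →
        ∑ i ∈ s, b' i + 1 = ∑ i ∈ s, b i := by
      intro s hps hjs
      rw [Finset.sum_eq_add_sum_sdiff_singleton_of_mem hjs b',
        Finset.sum_eq_add_sum_sdiff_singleton_of_mem hjs b]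
      have hrest : ∑ i ∈ s \ {j}, b' i = ∑ i ∈ s \ {j}, b i := by
        apply Finset.sum_congr rfl
        intro i hi
        simp only [Finset.mem_sdiff, Finset.mem_singleton] at hi
        exact hb'o i (fun hc => hps (hc ▸ hi.1)) hi.2
      rw [hrest, hb'j]
      omega
    have hsum_none : ∀ s : Finset (Fin m), p ∉ s → j ∉ s →
        ∑ i ∈ s, b' i = ∑ i ∈ s, b i := by
      intro s hps hjs
      apply Finset.sum_congr rfl
      intro i hi
      exact hb'o i (fun hc => hps (hc ▸ hi)) (fun hc => hjs (hc ▸ hi))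
    -- new suffix condition
    have hS' : ∀ k, SS a k ≤ SS b' k := by
      intro k
      rcases le_or_gt k (p:ℕ) with hk | hk
      · rw [show SS b' k = SS b k from hsum_pair _ (by simp; omega) (by simp; omega)]
        exact hS k
      · rcases le_or_gt k (j:ℕ) with hk2 | hk2
        · have := hsum_j (Finset.univ.filter (fun i : Fin m => k ≤ (i:ℕ)))
            (by simp; omega) (by simp; omega)
          have h2 := hstrict k hk hk2
          unfold SS at *
          omega
        · rw [show SS b' k = SS b k from hsum_none _ (by simp; omega) (by simp; omega)]
          exact hS k
    -- total sum preserved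
    have hsum' : ∑ i, a i = ∑ i, b' i := by
      rw [hsum, hsum_pair Finset.univ (Finset.mem_univ p) (Finset.mem_univ j)]
    -- measure decreases
    have hdec : ∑ i, b' i * b' i < ∑ i, b i * b i := by
      have hjs' : j ∈ Finset.univ \ ({p} : Finset (Fin m)) := by simp [hpj.symm]
      rw [Finset.sum_eq_add_sum_sdiff_singleton_of_mem (Finset.mem_univ p) (fun i => b' i * b' i),
        Finset.sum_eq_add_sum_sdiff_singleton_of_mem hjs' (fun i => b' i * b' i),
        Finset.sum_eq_add_sum_sdiff_singleton_of_mem (Finset.mem_univ p) (fun i => b i * b i),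
        Finset.sum_eq_add_sum_sdiff_singleton_of_mem hjs' (fun i => b i * b i)]
      have hrest : ∑ i ∈ (Finset.univ \ {p}) \ {j}, b' i * b' i
          = ∑ i ∈ (Finset.univ \ {p}) \ {j}, b i * b i := by
        apply Finset.sum_congr rfl
        intro i hi
        simp only [Finset.mem_sdiff, Finset.mem_singleton] at hi
        rw [hb'o i hi.1.2 hi.2]
      rw [hrest, hb'p, hb'j]
      have h1 : (b p + 1) * (b p + 1) + (b j - 1) * (b j - 1) < b p * b p + b j * b j := by
        obtain ⟨d, hd⟩ : ∃ d, b j = b p + 2 + d := ⟨b j - b p - 2, by omega⟩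
        rw [hd]
        have : b p + 2 + d - 1 = b p + 1 + d := by omega
        rw [this]
        nlinarith
      omega
    -- product transfer
    have htrans : ∏ i, f (b' i) ≤ ∏ i, f (b i) := by
      have hjs' : j ∈ Finset.univ \ ({p} : Finset (Fin m)) := by simp [hpj.symm]
      rw [Finset.prod_eq_mul_prod_sdiff_singleton_of_mem (Finset.mem_univ p) (fun i => f (b' i)),
        Finset.prod_eq_mul_prod_sdiff_singleton_of_mem hjs' (fun i => f (b' i)),
        Finset.prod_eq_mul_prod_sdiff_singleton_of_mem (Finset.mem_univ p) (fun i => f (b i)),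
        Finset.prod_eq_mul_prod_sdiff_singleton_of_mem hjs' (fun i => f (b i))]
      have hrest : ∏ i ∈ (Finset.univ \ {p}) \ {j}, f (b' i)
          = ∏ i ∈ (Finset.univ \ {p}) \ {j}, f (b i) := by
        apply Finset.prod_congr rfl
        intro i hi
        simp only [Finset.mem_sdiff, Finset.mem_singleton] at hi
        rw [hb'o i hi.1.2 hi.2]
      rw [hrest, hb'p, hb'j, ← mul_assoc, ← mul_assoc]
      have hrpos : (0:ℝ) < ∏ i ∈ (Finset.univ \ {p}) \ {j}, f (b i) :=
        Finset.prod_pos fun i _ => hpos _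
      apply mul_le_mul_of_nonneg_right _ (le_of_lt hrpos)
      have hkey : f (b j - 1) * f (b p + 1) ≤ f (b j) * f (b p) := by
        have := hR (b j - 1) (b p) (by omega)
        have he : b j - 1 + 1 = b j := by omega
        rwa [he] at this
      calc f (b p + 1) * f (b j - 1) = f (b j - 1) * f (b p + 1) := mul_comm _ _
        _ ≤ f (b j) * f (b p) := hkey
        _ = f (b p) * f (b j) := mul_comm _ _
    -- apply IH
    calc ∏ i, f (a i) ≤ ∏ i, f (b' i) :=
          ih (∑ i, b' i * b' i) (lt_of_lt_of_le hdec hN) a b' le_rfl hmono hS' hsum'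
      _ ≤ ∏ i, f (b i) := htrans


lemma card_cut (k : ℕ) (hk : k ≤ m) :
    (Finset.univ.filter (fun i : Fin m => k ≤ (i:ℕ))).card = m - k := by
  rcases Nat.lt_or_ge k m with h | h
  · have hset : Finset.univ.filter (fun i : Fin m => k ≤ (i:ℕ)) = Finset.Ici ⟨k, h⟩ := by
      ext i
      simp [Fin.le_def]
    rw [hset, Fin.card_Ici]
  · have hset : Finset.univ.filter (fun i : Fin m => k ≤ (i:ℕ)) = ∅ := by
      ext i
      simp only [Finset.mem_filter, Finset.mem_univ, true_and, Finset.notMem_empty,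
        iff_false, not_le]
      have := i.isLt
      omega
    rw [hset]
    simp
    omega

/-- sum over any subset of a monotone function is at most the top-card sum -/
lemma sum_le_SS {b : Fin m → ℕ} (hb : Monotone b) (t : Finset (Fin m)) :
    ∑ i ∈ t, b i ≤ SS b (m - t.card) := by
  set c := t.card with hc
  have hcm : c ≤ m := by
    rw [hc]
    simpa using Finset.card_le_univ t
  set top := Finset.univ.filter (fun i : Fin m => m - c ≤ (i:ℕ)) with htop
  have htopcard : top.card = c := by
    rw [htop, card_cut (m - c) (by omega)]
    omega
  have hcards : (t \ top).card = (top \ t).card :=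
    Finset.card_sdiff_comm (by rw [htopcard])
  have hkey : ∑ i ∈ t \ top, b i ≤ ∑ i ∈ top \ t, b i := by
    have e := Finset.equivOfCardEq hcards
    have hle : ∀ x : {x // x ∈ t \ top}, b x ≤ b (e x) := by
      intro x
      have hx : (x : Fin m) ∈ t \ top := x.2
      have hy : ((e x : {x // x ∈ top \ t}) : Fin m) ∈ top \ t := (e x).2
      simp only [htop, Finset.mem_sdiff, Finset.mem_filter, Finset.mem_univ, true_and] at hx hy
      apply hb
      rw [Fin.le_def]
      omega
    calc ∑ i ∈ t \ top, b i = ∑ x ∈ (t \ top).attach, b x := (Finset.sum_attach _ _).symm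
      _ ≤ ∑ x ∈ (t \ top).attach, b (e x) := Finset.sum_le_sum fun x _ => hle x
      _ = ∑ y : {x // x ∈ top \ t}, b y := by
          rw [← Equiv.sum_comp e (fun y : {x // x ∈ top \ t} => b y)]
          rw [Finset.attach_eq_univ]
      _ = ∑ i ∈ top \ t, b i := Finset.sum_attach _ _
  have h1 : ∑ i ∈ t ∩ top, b i + ∑ i ∈ t \ top, b i = ∑ i ∈ t, b i :=
    Finset.sum_inter_add_sum_sdiff t top b
  have h2 : ∑ i ∈ top ∩ t, b i + ∑ i ∈ top \ t, b i = ∑ i ∈ top, b i :=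
    Finset.sum_inter_add_sum_sdiff top t b
  have h3 : t ∩ top = top ∩ t := Finset.inter_comm t top
  unfold SS
  rw [← htop]
  rw [h3] at h1
  omega


lemma SS_zero_of_ge (x : Fin m → ℕ) {k : ℕ} (hk : m ≤ k) : SS x k = 0 := by
  unfold SS
  apply Finset.sum_eq_zero
  intro i hi
  simp only [Finset.mem_filter, Finset.mem_univ, true_and] at hi
  have := i.isLt
  omega

theorem cauchy2_majorization (m : ℕ) (hm : 1 ≤ m) (lam mu : Fin m → ℕ)
    (h : Majorizes mu lam) :
    ∏ i, cauchy2 (lam i) ≤ ∏ i, cauchy2 (mu i) := by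
  obtain ⟨hsub, htot⟩ := h
  set σ := Tuple.sort lam with hσ
  set τ := Tuple.sort mu with hτ
  set a : Fin m → ℕ := lam ∘ σ with ha
  set b : Fin m → ℕ := mu ∘ τ with hb
  have hamono : Monotone a := Tuple.monotone_sort lam
  have hbmono : Monotone b := Tuple.monotone_sort mu
  have hSS : ∀ k, SS a k ≤ SS b k := by
    intro k
    rcases le_or_gt k m with hk | hk
    · set s0 : Finset (Fin m) := Finset.univ.filter (fun i : Fin m => k ≤ (i:ℕ)) with hs0
      set s : Finset (Fin m) := s0.image σ with hs
      have hScard : s.card = m - k := by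
        rw [hs, Finset.card_image_of_injective _ σ.injective, hs0, card_cut k hk]
      have hSa : SS a k = ∑ i ∈ s, lam i := by
        rw [hs, Finset.sum_image (fun x _ y _ hxy => σ.injective hxy)]
        rfl
      obtain ⟨t, htc, hts⟩ := hsub s
      set u : Finset (Fin m) := t.image τ.symm with hu
      have hucard : u.card = m - k := by
        rw [hu, Finset.card_image_of_injective _ τ.symm.injective, htc, hScard]
      have hub : ∑ i ∈ u, b i = ∑ i ∈ t, mu i := by
        rw [hu, Finset.sum_image (fun x _ y _ hxy => τ.symm.injective hxy)]
        apply Finset.sum_congr rfl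
        intro i _
        simp [hb]
      have hfin : ∑ i ∈ u, b i ≤ SS b k := by
        have := sum_le_SS hbmono u
        rw [hucard] at this
        have hmk : m - (m - k) = k := by omega
        rwa [hmk] at this
      calc SS a k = ∑ i ∈ s, lam i := hSa
        _ ≤ ∑ i ∈ t, mu i := hts
        _ = ∑ i ∈ u, b i := hub.symm
        _ ≤ SS b k := hfin
    · rw [SS_zero_of_ge a (le_of_lt hk)]
      exact Nat.zero_le _
  have htotab : ∑ i, a i = ∑ i, b i := by
    have h1 : ∑ i, a i = ∑ i, lam i := Equiv.sum_comp σ lam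
    have h2 : ∑ i, b i = ∑ i, mu i := Equiv.sum_comp τ mu
    rw [h1, h2, htot]
  have hmain := key_lemma cauchy2 cauchy2_pos cauchy2_ratio (∑ i, b i * b i) a b
    le_rfl hamono hSS htotab
  have hpa : ∏ i, cauchy2 (lam i) = ∏ i, cauchy2 (a i) :=
    (Equiv.prod_comp σ (fun i => cauchy2 (lam i))).symm
  have hpb : ∏ i, cauchy2 (mu i) = ∏ i, cauchy2 (b i) :=
    (Equiv.prod_comp τ (fun i => cauchy2 (mu i))).symm
  rw [hpa, hpb]
  exact hmain
end

section
/- For all integers ℓ ≥ 0 and n > k > 0, (c_{ℓ+k})^n ≤ (c_{ℓ+n})^k (c_ℓ)^{n−k}. -/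
open MeasureTheory Real Nat

namespace CauchyAux

noncomputable def P (m : ℕ) (x : ℝ) : ℝ := ∏ i ∈ Finset.range m, (x + i)

lemma P_cont (m : ℕ) : Continuous (P m) := by
  unfold P
  exact continuous_finset_prod _ fun i _ => by fun_prop

lemma P_nonneg (m : ℕ) {x : ℝ} (hx : 0 ≤ x) : 0 ≤ P m x :=
  Finset.prod_nonneg fun i _ => by positivity

lemma P_le (m : ℕ) {x : ℝ} (hx0 : 0 ≤ x) (hx : x ≤ 1) :
    P m x ≤ ∏ i ∈ Finset.range m, ((1:ℝ) + i) :=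
  Finset.prod_le_prod (fun i _ => by positivity) (fun i _ => by linarith)

/-- pointwise natural-power inequality -/
lemma key_pow (l n k : ℕ) (hn : k ≤ n) {x : ℝ} (hx : 0 ≤ x) :
    P (l + k) x ^ n ≤ P (l + n) x ^ k * P l x ^ (n - k) := by
  set B := ∏ i ∈ Finset.range k, (x + ((l + i : ℕ) : ℝ)) with hB
  set C := ∏ i ∈ Finset.range (n - k), (x + (((l + k) + i : ℕ) : ℝ)) with hC
  have hPk : P (l + k) x = P l x * B := Finset.prod_range_add _ l k
  have hPn : P (l + n) x = P (l + k) x * C := by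
    have h1 : l + n = (l + k) + (n - k) := by omega
    rw [h1]
    exact Finset.prod_range_add _ (l + k) (n - k)
  set M : ℝ := x + (l + k) with hM
  have hM0 : (0:ℝ) ≤ M := by positivity
  have hB0 : (0:ℝ) ≤ B := Finset.prod_nonneg fun i _ => by positivity
  have hC0 : (0:ℝ) ≤ C := Finset.prod_nonneg fun i _ => by positivity
  have hBM : B ≤ M ^ k := by
    calc B ≤ ∏ _i ∈ Finset.range k, M := by
          refine Finset.prod_le_prod (fun i _ => by positivity) (fun i hi => ?_)
          have : (i : ℝ) ≤ k := Nat.cast_le.mpr (Finset.mem_range.mp hi).le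
          push_cast
          linarith
      _ = M ^ k := by rw [Finset.prod_const, Finset.card_range]
  have hMC : M ^ (n - k) ≤ C := by
    calc M ^ (n - k) = ∏ _i ∈ Finset.range (n - k), M := by
          rw [Finset.prod_const, Finset.card_range]
      _ ≤ C := by
          refine Finset.prod_le_prod (fun i _ => hM0) (fun i hi => ?_)
          have : (0:ℝ) ≤ (i : ℝ) := Nat.cast_nonneg i
          push_cast
          linarith
  have hBC : B ^ (n - k) ≤ C ^ k := by
    calc B ^ (n - k) ≤ (M ^ k) ^ (n - k) := pow_le_pow_left₀ hB0 hBM _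
      _ = (M ^ (n - k)) ^ k := by rw [← pow_mul, ← pow_mul, Nat.mul_comm]
      _ ≤ C ^ k := pow_le_pow_left₀ (by positivity) hMC _
  have hPl0 : (0:ℝ) ≤ P l x := P_nonneg l hx
  have hnkk : k + (n - k) = n := by omega
  calc P (l + k) x ^ n = P l x ^ n * (B ^ k * B ^ (n - k)) := by
        rw [hPk, mul_pow, ← pow_add, hnkk]
    _ ≤ P l x ^ n * (B ^ k * C ^ k) := by
        refine mul_le_mul_of_nonneg_left ?_ (by positivity)
        exact mul_le_mul_of_nonneg_left hBC (by positivity)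
    _ = (P l x ^ k * P l x ^ (n - k)) * (B ^ k * C ^ k) := by rw [← pow_add, hnkk]
    _ = (P l x * B * C) ^ k * P l x ^ (n - k) := by rw [mul_pow, mul_pow]; ring
  rw [hPn, hPk]

/-- pointwise rpow inequality -/
lemma key (l n k : ℕ) (hk : 0 < k) (hn : k < n) {x : ℝ} (hx : 0 ≤ x) :
    P (l + k) x ≤ P (l + n) x ^ ((k : ℝ) / n) * P l x ^ (((n - k : ℕ) : ℝ) / n) := by
  have hn0 : (n : ℝ) ≠ 0 := Nat.cast_ne_zero.mpr (by omega)
  have hX0 : (0:ℝ) ≤ P (l + n) x := P_nonneg _ hx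
  have hY0 : (0:ℝ) ≤ P l x := P_nonneg _ hx
  have hR0 : (0:ℝ) ≤ P (l + n) x ^ ((k : ℝ) / n) * P l x ^ (((n - k : ℕ) : ℝ) / n) :=
    mul_nonneg (Real.rpow_nonneg hX0 _) (Real.rpow_nonneg hY0 _)
  refine le_of_pow_le_pow_left₀ (by omega : n ≠ 0) hR0 ?_
  have e1 : (P (l + n) x ^ ((k : ℝ) / n)) ^ n = P (l + n) x ^ k := by
    rw [← Real.rpow_natCast (P (l + n) x ^ ((k : ℝ) / n)) n, ← Real.rpow_mul hX0,
      div_mul_cancel₀ _ hn0, Real.rpow_natCast]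
  have e2 : (P l x ^ (((n - k : ℕ) : ℝ) / n)) ^ n = P l x ^ (n - k) := by
    rw [← Real.rpow_natCast (P l x ^ (((n - k : ℕ) : ℝ) / n)) n, ← Real.rpow_mul hY0,
      div_mul_cancel₀ _ hn0, Real.rpow_natCast]
  rw [mul_pow, e1, e2]
  exact key_pow l n k hn.le hx

end CauchyAux

open CauchyAux in
theorem cauchy2_power_inequality (l n k : ℕ) (hk : 0 < k) (hn : k < n) :
    cauchy2 (l + k) ^ n ≤ cauchy2 (l + n) ^ k * cauchy2 l ^ (n - k) := by
  classical
  set μ : Measure ℝ := volume.restrict (Set.Ioc (0:ℝ) 1) with hμ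
  haveI : IsFiniteMeasure μ := by
    constructor
    rw [hμ, Measure.restrict_apply_univ, Real.volume_Ioc]
    exact ENNReal.ofReal_lt_top
  have hn0 : (n : ℝ) ≠ 0 := Nat.cast_ne_zero.mpr (by omega)
  have hk0 : (k : ℝ) ≠ 0 := Nat.cast_ne_zero.mpr (by omega)
  have hnk0 : ((n - k : ℕ) : ℝ) ≠ 0 := Nat.cast_ne_zero.mpr (by omega)
  have hcast : (k : ℝ) + ((n - k : ℕ) : ℝ) = (n : ℝ) := by
    push_cast [Nat.cast_sub hn.le]; ring
  -- cauchy2 as set integral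
  have hc : ∀ m, cauchy2 m = ∫ x, P m x ∂μ := fun m => by
    rw [cauchy2, intervalIntegral.integral_of_le zero_le_one]; rfl
  have hcnn : ∀ m, 0 ≤ cauchy2 m := fun m => by
    rw [hc]
    exact setIntegral_nonneg measurableSet_Ioc fun x hx => P_nonneg m hx.1.le
  -- conjugate exponents
  set p : ℝ := (n : ℝ) / k with hp
  set q : ℝ := (n : ℝ) / ((n - k : ℕ) : ℝ) with hq
  have hpq : p.HolderConjugate q := by
    constructor
    · rw [hp, hq, inv_div, inv_div, ← add_div, hcast, div_self hn0, inv_one]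
    · rw [hp]; exact div_pos (Nat.cast_pos.mpr (by omega)) (Nat.cast_pos.mpr hk)
    · rw [hq]; exact div_pos (Nat.cast_pos.mpr (by omega)) (Nat.cast_pos.mpr (by omega))
  -- the two functions
  set f : ℝ → ℝ := fun x => P (l + n) x ^ ((k : ℝ) / n) with hf
  set g : ℝ → ℝ := fun x => P l x ^ (((n - k : ℕ) : ℝ) / n) with hg
  have hfc : Continuous f :=
    (Real.continuous_rpow_const (by positivity)).comp (P_cont (l + n))
  have hgc : Continuous g :=
    (Real.continuous_rpow_const (by positivity)).comp (P_cont l)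
  have hae : ∀ᵐ x ∂μ, x ∈ Set.Ioc (0:ℝ) 1 := ae_restrict_mem measurableSet_Ioc
  -- Memℒp
  have memtop : ∀ (m : ℕ) (r : ℝ), 0 ≤ r → Continuous (fun x => P m x ^ (r:ℝ)) →
      MemLp (fun x => P m x ^ (r:ℝ)) (⊤ : ENNReal) μ := by
    intro m r hr hms
    refine memLp_top_of_bound hms.aestronglyMeasurable
      ((∏ i ∈ Finset.range m, ((1:ℝ) + i)) ^ r) ?_
    filter_upwards [hae] with x hx
    rw [Real.norm_of_nonneg (Real.rpow_nonneg (P_nonneg m hx.1.le) r)]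
    exact Real.rpow_le_rpow (P_nonneg m hx.1.le) (P_le m hx.1.le hx.2) hr
  have hfL : MemLp f (ENNReal.ofReal p) μ :=
    (memtop (l + n) _ (by positivity) hfc).mono_exponent le_top
  have hgL : MemLp g (ENNReal.ofReal q) μ :=
    (memtop l _ (by positivity) hgc).mono_exponent le_top
  have hfnn : 0 ≤ᵐ[μ] f := by
    filter_upwards [hae] with x hx
    exact Real.rpow_nonneg (P_nonneg _ hx.1.le) _
  have hgnn : 0 ≤ᵐ[μ] g := by
    filter_upwards [hae] with x hx
    exact Real.rpow_nonneg (P_nonneg _ hx.1.le) _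
  -- Hölder
  have holder := MeasureTheory.integral_mul_le_Lp_mul_Lq_of_nonneg hpq hfnn hgnn hfL hgL
  -- identify the integrals
  have hfp : ∫ x, f x ^ p ∂μ = cauchy2 (l + n) := by
    rw [hc]
    refine setIntegral_congr_fun measurableSet_Ioc fun x hx => ?_
    have h0 := P_nonneg (l + n) hx.1.le
    show (P (l + n) x ^ ((k : ℝ) / n)) ^ p = P (l + n) x
    rw [← Real.rpow_mul h0, hp]
    have h1 : (k:ℝ)/n * ((n:ℝ)/k) = 1 := by field_simp
    rw [h1, Real.rpow_one]
  have hgq : ∫ x, g x ^ q ∂μ = cauchy2 l := by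
    rw [hc]
    refine setIntegral_congr_fun measurableSet_Ioc fun x hx => ?_
    have h0 := P_nonneg l hx.1.le
    show (P l x ^ (((n - k : ℕ) : ℝ) / n)) ^ q = P l x
    rw [← Real.rpow_mul h0, hq]
    have h1 : ((n - k : ℕ):ℝ)/n * ((n:ℝ)/((n - k : ℕ):ℝ)) = 1 := by field_simp
    rw [h1, Real.rpow_one]
  -- lower bound: cauchy2 (l+k) ≤ ∫ f * g
  have hmul_int : Integrable (fun x => f x * g x) μ := (hfc.mul hgc).integrableOn_Ioc
  have h1 : cauchy2 (l + k) ≤ ∫ x, f x * g x ∂μ := by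
    rw [hc]
    refine setIntegral_mono_on ((P_cont (l + k)).integrableOn_Ioc) hmul_int
      measurableSet_Ioc fun x hx => ?_
    exact key l n k hk hn hx.1.le
  have h2 : cauchy2 (l + k) ≤ cauchy2 (l + n) ^ (1 / p) * cauchy2 l ^ (1 / q) := by
    calc cauchy2 (l + k) ≤ ∫ x, f x * g x ∂μ := h1
      _ ≤ (∫ x, f x ^ p ∂μ) ^ (1 / p) * (∫ x, g x ^ q ∂μ) ^ (1 / q) := holder
      _ = cauchy2 (l + n) ^ (1 / p) * cauchy2 l ^ (1 / q) := by rw [hfp, hgq]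
  -- raise to the n-th power
  have hXnn := hcnn (l + n)
  have hYnn := hcnn l
  have e1 : (cauchy2 (l + n) ^ (1 / p)) ^ n = cauchy2 (l + n) ^ k := by
    rw [hp, one_div_div, ← Real.rpow_natCast (cauchy2 (l + n) ^ ((k:ℝ) / n)) n,
      ← Real.rpow_mul hXnn, div_mul_cancel₀ _ hn0, Real.rpow_natCast]
  have e2 : (cauchy2 l ^ (1 / q)) ^ n = cauchy2 l ^ (n - k) := by
    rw [hq, one_div_div, ← Real.rpow_natCast (cauchy2 l ^ (((n - k : ℕ):ℝ) / n)) n,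
      ← Real.rpow_mul hYnn, div_mul_cancel₀ _ hn0, Real.rpow_natCast]
  calc cauchy2 (l + k) ^ n
      ≤ (cauchy2 (l + n) ^ (1 / p) * cauchy2 l ^ (1 / q)) ^ n :=
        pow_le_pow_left₀ (hcnn _) h2 n
    _ = cauchy2 (l + n) ^ k * cauchy2 l ^ (n - k) := by rw [mul_pow, e1, e2]
end

section
/- For all positive integers n, m and every integer ℓ ≥ 0, the quantity G = c_{ℓ+n+2m}(c_ℓ)² − c_{ℓ+n+m} c_{ℓ+m} c_ℓ − c_{ℓ+n} c_{ℓ+2m} c_ℓ + c_{ℓ+n} (c_{ℓ+m})² is nonnegative. -/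
open MeasureTheory Real Nat

noncomputable def pp (a k : ℕ) (x : ℝ) : ℝ := ∏ i ∈ Finset.range k, (x + (a + i))

lemma pp_cont (a k : ℕ) : Continuous (pp a k) := by
  unfold pp; fun_prop

lemma pp_nonneg (a k : ℕ) {x : ℝ} (hx : 0 ≤ x) : 0 ≤ pp a k x :=
  Finset.prod_nonneg fun i _ => by positivity

lemma pp_le_pp {a b k : ℕ} {x y : ℝ} (hy : 0 ≤ y) (h : y + a ≤ x + b) :
    pp a k y ≤ pp b k x :=
  Finset.prod_le_prod (fun i _ => by positivity) (fun i _ => by linarith)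

lemma pp_add (a j k : ℕ) (x : ℝ) : pp a (j + k) x = pp a j x * pp (a + j) k x := by
  unfold pp
  rw [Finset.prod_range_add]
  congr 1
  refine Finset.prod_congr rfl fun i _ => ?_
  push_cast; ring

lemma cauchy2_pp (k : ℕ) : cauchy2 k = ∫ x in (0:ℝ)..1, pp 0 k x := by
  unfold cauchy2 pp; norm_num

lemma cauchy2_eq_s13 (l k : ℕ) :
    cauchy2 (l + k) = ∫ x in (0:ℝ)..1, pp 0 l x * pp l k x := by
  rw [cauchy2_pp]
  simp only [pp_add, zero_add]

theorem cauchy2_G_nonneg (n m l : ℕ) (hn : 0 < n) (hm : 0 < m) :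
    0 ≤ cauchy2 (l + n + 2 * m) * cauchy2 l ^ 2
        - cauchy2 (l + n + m) * cauchy2 (l + m) * cauchy2 l
        - cauchy2 (l + n) * cauchy2 (l + 2 * m) * cauchy2 l
        + cauchy2 (l + n) * cauchy2 (l + m) ^ 2 := by
  have hn1 : (1:ℝ) ≤ n := by exact_mod_cast hn
  have hm1 : (1:ℝ) ≤ m := by exact_mod_cast hm
  set ρ := pp 0 l with hρ
  set Pn := pp l n with hPn
  set Pm := pp l m with hPm
  set Q := pp (l + n) m with hQ
  set T := pp (l + n + m) m with hT
  set R := pp (l + m) m with hR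
  set A := cauchy2 l with hAdef
  set Cm := cauchy2 (l + m) with hCmdef
  -- integral representations
  have hA : A = ∫ x in (0:ℝ)..1, ρ x := by
    rw [hAdef, cauchy2_pp]
  have hCm : Cm = ∫ x in (0:ℝ)..1, ρ x * Pm x := cauchy2_eq_s13 l m
  have hCn : cauchy2 (l + n) = ∫ x in (0:ℝ)..1, ρ x * Pn x := cauchy2_eq_s13 l n
  have hC2m : cauchy2 (l + 2 * m) = ∫ x in (0:ℝ)..1, ρ x * (Pm x * R x) := by
    rw [cauchy2_eq_s13]
    simp only [two_mul, pp_add, hPm, hR, hρ]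
  have hCnm : cauchy2 (l + n + m) = ∫ x in (0:ℝ)..1, ρ x * (Pn x * Q x) := by
    rw [add_assoc, cauchy2_eq_s13]
    simp only [pp_add, hPn, hQ, hρ]
  have hCn2m : cauchy2 (l + n + 2 * m) = ∫ x in (0:ℝ)..1, ρ x * (Pn x * (Q x * T x)) := by
    rw [add_assoc, cauchy2_eq_s13]
    simp only [two_mul, pp_add, hPn, hQ, hT, mul_assoc, add_assoc, hρ]
  -- basic positivity
  have hρc : Continuous ρ := pp_cont 0 l
  have hρ0 : ∀ x ∈ Set.Icc (0:ℝ) 1, 0 ≤ ρ x := fun x hx => pp_nonneg _ _ hx.1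
  have hA0 : 0 ≤ A := by
    rw [hA]; exact intervalIntegral.integral_nonneg (by norm_num) hρ0
  -- Cm ≤ A * T x  and  Cm ≤ A * R x for x in Icc
  have key : ∀ b' : ℕ, (l:ℝ) + 1 ≤ b' → ∀ x ∈ Set.Icc (0:ℝ) 1, Cm ≤ A * pp b' m x := by
    intro b' hb' x hx
    have : Cm ≤ ∫ z in (0:ℝ)..1, ρ z * pp b' m x := by
      rw [hCm]
      apply intervalIntegral.integral_mono_on (by norm_num)
      · exact ((pp_cont 0 l).mul (pp_cont l m)).intervalIntegrable 0 1
      · exact ((pp_cont 0 l).mul continuous_const).intervalIntegrable 0 1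
      · intro z hz
        have h1 : Pm z ≤ pp b' m x := pp_le_pp hz.1 (by linarith [hz.2, hx.1])
        exact mul_le_mul_of_nonneg_left h1 (hρ0 z hz)
    calc Cm ≤ ∫ z in (0:ℝ)..1, ρ z * pp b' m x := this
      _ = A * pp b' m x := by rw [intervalIntegral.integral_mul_const, hA]
  have hCmT : ∀ x ∈ Set.Icc (0:ℝ) 1, Cm ≤ A * T x := by
    intro x hx
    exact key (l + n + m) (by push_cast; linarith) x hx
  have hCmR : ∀ x ∈ Set.Icc (0:ℝ) 1, Cm ≤ A * R x := by
    intro x hx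
    exact key (l + m) (by push_cast; linarith) x hx
  -- K := A * C2m - Cm^2 ≤ A * (Q x * (A * T x - Cm)) for x ∈ Icc
  set K := A * cauchy2 (l + 2 * m) - Cm ^ 2 with hKdef
  have hKle : ∀ x ∈ Set.Icc (0:ℝ) 1, K ≤ A * (Q x * (A * T x - Cm)) := by
    intro x hx
    have e1 : K = ∫ y in (0:ℝ)..1, ρ y * (Pm y * (A * R y - Cm)) := by
      rw [hKdef, hC2m, hCm, pow_two, ← intervalIntegral.integral_const_mul,
        ← intervalIntegral.integral_const_mul, ← intervalIntegral.integral_sub]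
      · congr 1; funext y; ring
      · exact (continuous_const.mul ((pp_cont 0 l).mul ((pp_cont l m).mul (pp_cont (l+m) m)))).intervalIntegrable 0 1
      · exact (continuous_const.mul ((pp_cont 0 l).mul (pp_cont l m))).intervalIntegrable 0 1
    have e2 : (∫ y in (0:ℝ)..1, ρ y * (Q x * (A * T x - Cm))) = A * (Q x * (A * T x - Cm)) := by
      rw [intervalIntegral.integral_mul_const, hA]
    rw [e1, ← e2]
    apply intervalIntegral.integral_mono_on (by norm_num)
    · exact ((pp_cont 0 l).mul ((pp_cont l m).mul ((continuous_const.mul (pp_cont (l+m) m)).sub continuous_const))).intervalIntegrable 0 1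
    · exact ((pp_cont 0 l).mul continuous_const).intervalIntegrable 0 1
    · intro y hy
      have hPmQ : Pm y ≤ Q x := pp_le_pp hy.1 (by push_cast; linarith [hy.2, hx.1])
      have hRT : R y ≤ T x := pp_le_pp hy.1 (by push_cast; linarith [hy.2, hx.1])
      have h2 : 0 ≤ A * R y - Cm := by linarith [hCmR y hy]
      have hQ0 : 0 ≤ Q x := pp_nonneg _ _ hx.1
      have hPm0 : 0 ≤ Pm y := pp_nonneg _ _ hy.1
      have : Pm y * (A * R y - Cm) ≤ Q x * (A * T x - Cm) := by
        calc Pm y * (A * R y - Cm) ≤ Q x * (A * R y - Cm) := mul_le_mul_of_nonneg_right hPmQ h2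
          _ ≤ Q x * (A * T x - Cm) := by
              apply mul_le_mul_of_nonneg_left _ hQ0
              nlinarith
      exact mul_le_mul_of_nonneg_left this (hρ0 y hy)
  -- final assembly
  have expand : cauchy2 (l + n + 2 * m) * A ^ 2 - cauchy2 (l + n + m) * Cm * A
      - cauchy2 (l + n) * cauchy2 (l + 2 * m) * A + cauchy2 (l + n) * Cm ^ 2
      = ∫ x in (0:ℝ)..1,
          (A ^ 2 * (ρ x * (Pn x * (Q x * T x))) - A * Cm * (ρ x * (Pn x * Q x))
            - K * (ρ x * Pn x)) := by
    rw [intervalIntegral.integral_sub, intervalIntegral.integral_sub,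
      intervalIntegral.integral_const_mul, intervalIntegral.integral_const_mul,
      intervalIntegral.integral_const_mul, ← hCn2m, ← hCnm, ← hCn, hKdef]
    · ring
    · exact (continuous_const.mul ((pp_cont 0 l).mul ((pp_cont l n).mul ((pp_cont (l+n) m).mul (pp_cont (l+n+m) m))))).intervalIntegrable 0 1
    · exact (continuous_const.mul ((pp_cont 0 l).mul ((pp_cont l n).mul (pp_cont (l+n) m)))).intervalIntegrable 0 1
    · exact ((continuous_const.mul ((pp_cont 0 l).mul ((pp_cont l n).mul ((pp_cont (l+n) m).mul (pp_cont (l+n+m) m))))).sub (continuous_const.mul ((pp_cont 0 l).mul ((pp_cont l n).mul (pp_cont (l+n) m))))).intervalIntegrable 0 1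
    · exact (continuous_const.mul ((pp_cont 0 l).mul (pp_cont l n))).intervalIntegrable 0 1
  have nn : 0 ≤ ∫ x in (0:ℝ)..1,
      (A ^ 2 * (ρ x * (Pn x * (Q x * T x))) - A * Cm * (ρ x * (Pn x * Q x))
        - K * (ρ x * Pn x)) := by
    apply intervalIntegral.integral_nonneg (by norm_num)
    intro x hx
    have h1 := hKle x hx
    have hρx := hρ0 x hx
    have hPnx : 0 ≤ Pn x := pp_nonneg _ _ hx.1
    have hb : 0 ≤ A ^ 2 * (Q x * T x) - A * Cm * Q x - K := by nlinarith
    nlinarith [mul_nonneg (mul_nonneg hρx hPnx) hb]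
  linarith [expand ▸ nn]
end

section
/- For positive integers n, m with m ≤ n and every integer ℓ ≥ 0, H ≤ G, where G = c_{ℓ+n+2m}(c_ℓ)² − c_{ℓ+n+m} c_{ℓ+m} c_ℓ − c_{ℓ+n} c_{ℓ+2m} c_ℓ + c_{ℓ+n} (c_{ℓ+m})² and H = c_{ℓ+n+2m}(c_ℓ)² − 2 c_{ℓ+n+m} c_{ℓ+m} c_ℓ + c_{ℓ+n} (c_{ℓ+m})². -/
open MeasureTheory Real Nat

namespace Cauchy2Aux

noncomputable def g (k : ℕ) (x : ℝ) : ℝ := ∏ i ∈ Finset.range k, (x + i)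
noncomputable def p (a b : ℕ) (x : ℝ) : ℝ := ∏ i ∈ Finset.Ico a b, (x + i)

lemma g_cont (k : ℕ) : Continuous (g k) := by
  unfold g; exact continuous_finset_prod _ fun i _ => by continuity

lemma g_nonneg (k : ℕ) {x : ℝ} (hx : 0 ≤ x) : 0 ≤ g k x :=
  Finset.prod_nonneg fun i _ => by positivity

lemma g_intble (k : ℕ) : IntervalIntegrable (g k) MeasureTheory.volume 0 1 :=
  (g_cont k).intervalIntegrable 0 1

lemma cauchy2_eq (k : ℕ) : cauchy2 k = ∫ x in (0:ℝ)..1, g k x := rfl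

lemma cauchy2_nonneg (k : ℕ) : 0 ≤ cauchy2 k := by
  rw [cauchy2_eq]
  exact intervalIntegral.integral_nonneg (by norm_num) fun x hx => g_nonneg k hx.1

lemma p_nonneg (a b : ℕ) {x : ℝ} (hx : 0 ≤ x) : 0 ≤ p a b x :=
  Finset.prod_nonneg fun i _ => by positivity

lemma p_mono (a b : ℕ) {x y : ℝ} (hx : 0 ≤ x) (hxy : x ≤ y) : p a b x ≤ p a b y :=
  Finset.prod_le_prod (fun i _ => by positivity) (fun i _ => by linarith)

lemma g_split {a b : ℕ} (hab : a ≤ b) (x : ℝ) : g b x = g a x * p a b x := by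
  unfold g p
  rw [Finset.range_eq_Ico, ← Finset.prod_Ico_consecutive _ (Nat.zero_le a) hab, Finset.range_eq_Ico]

lemma p_split {a b c : ℕ} (hab : a ≤ b) (hbc : b ≤ c) (x : ℝ) :
    p a c x = p a b x * p b c x := by
  unfold p; rw [← Finset.prod_Ico_consecutive _ hab hbc]

lemma p_shift_le (a b m : ℕ) {x : ℝ} (hx : 0 ≤ x) : p a b x ≤ p (a + m) (b + m) x := by
  unfold p
  rw [show Finset.Ico (a+m) (b+m) = Finset.map (addRightEmbedding m) (Finset.Ico a b) by
      rw [Finset.map_add_right_Ico], Finset.prod_map]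
  apply Finset.prod_le_prod (fun i _ => by positivity)
  intro i _
  simp only [addRightEmbedding_apply]
  push_cast
  linarith [Nat.cast_nonneg (α := ℝ) m]

variable {n m l : ℕ}

/-- asymmetric version of the pointwise key inequality -/
lemma key_pt_aux (hm : 0 < m) (hnm : m ≤ n) {x y : ℝ} (hx : 0 ≤ x) (hxy : x ≤ y) :
    g (l+n) x * g (l+2*m) y + g (l+n) y * g (l+2*m) x
      ≤ g (l+m) x * g (l+n+m) y + g (l+m) y * g (l+n+m) x := by
  have hy : (0:ℝ) ≤ y := le_trans hx hxy
  have e1 : l + m ≤ l + 2*m := by omega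
  have e2 : l + 2*m ≤ l + n + m := by omega
  have e3 : l + m ≤ l + n := by omega
  have e4 : l + m ≤ l + n + m := by omega
  -- splits
  have sx1 := g_split e3 x; have sy1 := g_split e3 y
  have sx2 := g_split e1 x; have sy2 := g_split e1 y
  have sx3 := g_split e4 x; have sy3 := g_split e4 y
  have px : p (l+m) (l+n+m) x = p (l+m) (l+2*m) x * p (l+2*m) (l+n+m) x := p_split e1 e2 x
  have py : p (l+m) (l+n+m) y = p (l+m) (l+2*m) y * p (l+2*m) (l+n+m) y := p_split e1 e2 y
  set P1 := g (l+m) x with hP1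
  set P2 := g (l+m) y with hP2
  set ux := p (l+m) (l+2*m) x
  set uy := p (l+m) (l+2*m) y
  set vx := p (l+m) (l+n) x
  set vy := p (l+m) (l+n) y
  set wx := p (l+2*m) (l+n+m) x
  set wy := p (l+2*m) (l+n+m) y
  rw [sx1, sy1, sx2, sy2, sx3, sy3, px, py]
  -- facts
  have hP1n : 0 ≤ P1 := g_nonneg _ hx
  have hP2n : 0 ≤ P2 := g_nonneg _ hy
  have hux : 0 ≤ ux := p_nonneg _ _ hx
  have huy : 0 ≤ uy := p_nonneg _ _ hy
  have hvx : 0 ≤ vx := p_nonneg _ _ hx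
  have hvy : 0 ≤ vy := p_nonneg _ _ hy
  have huxy : ux ≤ uy := p_mono _ _ hx hxy
  have hvxy : vx ≤ vy := p_mono _ _ hx hxy
  have hvwx : vx ≤ wx := by
    have h := p_shift_le (l+m) (l+n) m hx
    have : l + m + m = l + 2*m := by omega
    rwa [this] at h
  have hvwy : vy ≤ wy := by
    have h := p_shift_le (l+m) (l+n) m hy
    have : l + m + m = l + 2*m := by omega
    rwa [this] at h
  have step : vx * uy + vy * ux ≤ uy * wy + ux * wx := by
    nlinarith [mul_nonneg huy (sub_nonneg.2 hvwy), mul_nonneg hux (sub_nonneg.2 hvwx),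
      mul_nonneg (sub_nonneg.2 huxy) (sub_nonneg.2 hvxy)]
  have hPP : 0 ≤ P1 * P2 := mul_nonneg hP1n hP2n
  nlinarith [mul_le_mul_of_nonneg_left step hPP]

lemma key_pt (hm : 0 < m) (hnm : m ≤ n) {x y : ℝ} (hx : 0 ≤ x) (hy : 0 ≤ y) :
    g (l+n) x * g (l+2*m) y + g (l+n) y * g (l+2*m) x
      ≤ g (l+m) x * g (l+n+m) y + g (l+m) y * g (l+n+m) x := by
  rcases le_total x y with h | h
  · exact key_pt_aux hm hnm hx h
  · have := key_pt_aux (l := l) (n := n) hm hnm hy h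
    linarith

/-- inner integral step -/
lemma key_inner (hm : 0 < m) (hnm : m ≤ n) {x : ℝ} (hx : 0 ≤ x) :
    g (l+n) x * cauchy2 (l+2*m) + g (l+2*m) x * cauchy2 (l+n)
      ≤ g (l+m) x * cauchy2 (l+n+m) + g (l+n+m) x * cauchy2 (l+m) := by
  have L : g (l+n) x * cauchy2 (l+2*m) + g (l+2*m) x * cauchy2 (l+n)
      = ∫ y in (0:ℝ)..1, (g (l+n) x * g (l+2*m) y + g (l+n) y * g (l+2*m) x) := by
    rw [intervalIntegral.integral_add (((g_intble (l+2*m)).const_mul _))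
      ((g_intble (l+n)).mul_const _), intervalIntegral.integral_const_mul,
      intervalIntegral.integral_mul_const, cauchy2_eq, cauchy2_eq]
    ring
  have R : g (l+m) x * cauchy2 (l+n+m) + g (l+n+m) x * cauchy2 (l+m)
      = ∫ y in (0:ℝ)..1, (g (l+m) x * g (l+n+m) y + g (l+m) y * g (l+n+m) x) := by
    rw [intervalIntegral.integral_add (((g_intble (l+n+m)).const_mul _))
      ((g_intble (l+m)).mul_const _), intervalIntegral.integral_const_mul,
      intervalIntegral.integral_mul_const, cauchy2_eq, cauchy2_eq]
    ring
  rw [L, R]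
  apply intervalIntegral.integral_mono_on (by norm_num)
    (((g_intble (l+2*m)).const_mul _).add ((g_intble (l+n)).mul_const _))
    (((g_intble (l+n+m)).const_mul _).add ((g_intble (l+m)).mul_const _))
  intro y hy
  exact key_pt hm hnm hx hy.1

/-- the key product inequality -/
lemma key (hm : 0 < m) (hnm : m ≤ n) :
    cauchy2 (l+n) * cauchy2 (l+2*m) ≤ cauchy2 (l+m) * cauchy2 (l+n+m) := by
  have L : cauchy2 (l+n) * cauchy2 (l+2*m) + cauchy2 (l+2*m) * cauchy2 (l+n)
      = ∫ x in (0:ℝ)..1, (g (l+n) x * cauchy2 (l+2*m) + g (l+2*m) x * cauchy2 (l+n)) := by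
    rw [intervalIntegral.integral_add ((g_intble (l+n)).mul_const _)
      ((g_intble (l+2*m)).mul_const _), intervalIntegral.integral_mul_const,
      intervalIntegral.integral_mul_const, cauchy2_eq, cauchy2_eq]
  have R : cauchy2 (l+m) * cauchy2 (l+n+m) + cauchy2 (l+n+m) * cauchy2 (l+m)
      = ∫ x in (0:ℝ)..1, (g (l+m) x * cauchy2 (l+n+m) + g (l+n+m) x * cauchy2 (l+m)) := by
    rw [intervalIntegral.integral_add ((g_intble (l+m)).mul_const _)
      ((g_intble (l+n+m)).mul_const _), intervalIntegral.integral_mul_const,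
      intervalIntegral.integral_mul_const, cauchy2_eq, cauchy2_eq]
  have main : cauchy2 (l+n) * cauchy2 (l+2*m) + cauchy2 (l+2*m) * cauchy2 (l+n)
      ≤ cauchy2 (l+m) * cauchy2 (l+n+m) + cauchy2 (l+n+m) * cauchy2 (l+m) := by
    rw [L, R]
    apply intervalIntegral.integral_mono_on (by norm_num)
      (((g_intble (l+n)).mul_const _).add ((g_intble (l+2*m)).mul_const _))
      (((g_intble (l+m)).mul_const _).add ((g_intble (l+n+m)).mul_const _))
    intro x hx
    exact key_inner hm hnm hx.1
  linarith

end Cauchy2Aux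

theorem cauchy2_H_le_G (n m l : ℕ) (hn : 0 < n) (hm : 0 < m) (hnm : m ≤ n) :
    cauchy2 (l + n + 2 * m) * cauchy2 l ^ 2
        - 2 * cauchy2 (l + n + m) * cauchy2 (l + m) * cauchy2 l
        + cauchy2 (l + n) * cauchy2 (l + m) ^ 2
      ≤ cauchy2 (l + n + 2 * m) * cauchy2 l ^ 2
        - cauchy2 (l + n + m) * cauchy2 (l + m) * cauchy2 l
        - cauchy2 (l + n) * cauchy2 (l + 2 * m) * cauchy2 l
        + cauchy2 (l + n) * cauchy2 (l + m) ^ 2 := by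
  have h := Cauchy2Aux.key (l := l) hm hnm
  have hl := Cauchy2Aux.cauchy2_nonneg l
  nlinarith [mul_le_mul_of_nonneg_right h hl]
end
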